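/- arXiv:math/0302345 — 3 statements merged into one kernel-verified Lean document; each statement's English description precedes it below -/
import Mathlib

section
/- (Mixed C²-estimates at the boundary.) There exists a constant C, depending only on Ω, f, φ and u₀ (in particular independent of T), such that for every T > 0 and every smooth strictly convex solution u of the flow on [0,T], every x ∈ ∂Ω, every t ∈ [0,T], and every unit vector τ tangential to ∂Ω at x (i.e., |τ| = 1 and ⟨τ, ν(x)⟩ = 0), one has |⟨D²u(x,t)·τ, ν(x)⟩| ≤ C. -/
open Set Filter Topology MeasureTheory

noncomputable section

/-- `gradv u x` is the gradient (vector of partial derivatives) of `u` at `x`. -/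
def gradv {n : ℕ} (u : (Fin n → ℝ) → ℝ) (x : Fin n → ℝ) : Fin n → ℝ :=
  fun i => fderiv ℝ u x (Pi.single i 1)

/-- `hessM u x` is the Hessian matrix `D²u(x)`. -/
def hessM {n : ℕ} (u : (Fin n → ℝ) → ℝ) (x : Fin n → ℝ) : Matrix (Fin n) (Fin n) ℝ :=
  Matrix.of (fun i j => fderiv ℝ (fun y => fderiv ℝ u y (Pi.single j 1)) x (Pi.single i 1))

/-- Euclidean inner product on `Fin n → ℝ`. -/
def dotp {n : ℕ} (a b : Fin n → ℝ) : ℝ := ∑ i, a i * b i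

/-- Euclidean norm on `Fin n → ℝ`. -/
def eNorm {n : ℕ} (a : Fin n → ℝ) : ℝ := Real.sqrt (dotp a a)

/-- Inner unit normal `ν(x) = -∇Φ(x)/|∇Φ(x)|` for the domain `Ω = {Φ < 0}`. -/
def innerNormal {n : ℕ} (Φ : (Fin n → ℝ) → ℝ) (x : Fin n → ℝ) : Fin n → ℝ :=
  fun i => -(gradv Φ x i) / eNorm (gradv Φ x)

/-- `u : cl Ω × [0,T] → ℝ` is a smooth strictly convex solution of the flow
`∂u/∂t = log det D²u - log f(x, Du)` with Neumann condition `⟨Du, ν⟩ = φ`. -/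
def IsFlowSol {n : ℕ} (Ω : Set (Fin n → ℝ)) (Φ : (Fin n → ℝ) → ℝ)
    (f : (Fin n → ℝ) → (Fin n → ℝ) → ℝ) (φ : (Fin n → ℝ) → ℝ) (T : ℝ)
    (u : (Fin n → ℝ) → ℝ → ℝ) : Prop :=
  ContDiff ℝ (⊤ : ℕ∞) (fun p : (Fin n → ℝ) × ℝ => u p.1 p.2) ∧
  (∀ t ∈ Icc (0:ℝ) T, ∀ x ∈ closure Ω, (hessM (fun y => u y t) x).PosDef) ∧
  (∀ t ∈ Ioc (0:ℝ) T, ∀ x ∈ Ω,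
     deriv (u x) t =
       Real.log (hessM (fun y => u y t) x).det -
         Real.log (f x (gradv (fun y => u y t) x))) ∧
  (∀ t ∈ Ioc (0:ℝ) T, ∀ x ∈ frontier Ω,
     dotp (gradv (fun y => u y t) x) (innerNormal Φ x) = φ x)

namespace MixedC2Aux

variable {n : ℕ}

lemma dotp_comm (a b : Fin n → ℝ) : dotp a b = dotp b a := by simp [dotp, mul_comm]
lemma dotp_self_nonneg (a : Fin n → ℝ) : 0 ≤ dotp a a :=
  Finset.sum_nonneg fun i _ => mul_self_nonneg _
lemma eNorm_nonneg (a : Fin n → ℝ) : 0 ≤ eNorm a := Real.sqrt_nonneg _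
lemma eNorm_sq (a : Fin n → ℝ) : eNorm a ^ 2 = dotp a a := by
  rw [eNorm, Real.sq_sqrt (dotp_self_nonneg a)]
lemma dotp_self_eq_zero {a : Fin n → ℝ} (h : dotp a a = 0) : a = 0 := by
  have h2 := (Finset.sum_eq_zero_iff_of_nonneg (fun i _ => mul_self_nonneg (a i))).1 h
  funext i
  simpa [mul_self_eq_zero] using h2 i (Finset.mem_univ i)
lemma dotp_self_pos {a : Fin n → ℝ} (h : a ≠ 0) : 0 < dotp a a := by
  rcases lt_or_eq_of_le (dotp_self_nonneg a) with h1 | h1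
  · exact h1
  · exact absurd (dotp_self_eq_zero h1.symm) h
lemma eNorm_pos {a : Fin n → ℝ} (h : a ≠ 0) : 0 < eNorm a :=
  Real.sqrt_pos.2 (dotp_self_pos h)
lemma dotp_le (a b : Fin n → ℝ) : dotp a b ≤ eNorm a * eNorm b := by
  have h := Finset.sum_mul_sq_le_sq_mul_sq Finset.univ a b
  have h2 : (dotp a b) ^ 2 ≤ (eNorm a * eNorm b) ^ 2 := by
    rw [mul_pow, eNorm_sq, eNorm_sq]
    simpa [dotp, sq] using h
  have hnn : (0:ℝ) ≤ eNorm a * eNorm b := mul_nonneg (eNorm_nonneg a) (eNorm_nonneg b)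
  nlinarith [sq_nonneg (dotp a b - eNorm a * eNorm b), sq_nonneg (dotp a b + eNorm a * eNorm b)]
lemma dotp_neg_left (a b : Fin n → ℝ) : dotp (-a) b = -dotp a b := by
  simp [dotp, Finset.sum_neg_distrib]
lemma eNorm_neg (a : Fin n → ℝ) : eNorm (-a) = eNorm a := by
  unfold eNorm; congr 1; simp [dotp]
lemma abs_dotp_le (a b : Fin n → ℝ) : |dotp a b| ≤ eNorm a * eNorm b := by
  rcases abs_cases (dotp a b) with ⟨h, _⟩ | ⟨h, _⟩
  · rw [h]; exact dotp_le a b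
  · rw [h]
    have := dotp_le (-a) b
    rw [dotp_neg_left, eNorm_neg] at this
    linarith
lemma dotp_add_left (a b c : Fin n → ℝ) : dotp (a + b) c = dotp a c + dotp b c := by
  simp [dotp, add_mul, Finset.sum_add_distrib]
lemma dotp_sub_left (a b c : Fin n → ℝ) : dotp (a - b) c = dotp a c - dotp b c := by
  simp [dotp, sub_mul, Finset.sum_sub_distrib]
lemma dotp_sub_right (a b c : Fin n → ℝ) : dotp a (b - c) = dotp a b - dotp a c := by
  simp [dotp, mul_sub, Finset.sum_sub_distrib]
lemma dotp_smul_left (c : ℝ) (a b : Fin n → ℝ) : dotp (c • a) b = c * dotp a b := by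
  simp only [dotp, Pi.smul_apply, smul_eq_mul, Finset.mul_sum]
  exact Finset.sum_congr rfl fun i _ => by ring
lemma dotp_smul_right (c : ℝ) (a b : Fin n → ℝ) : dotp a (c • b) = c * dotp a b := by
  rw [dotp_comm, dotp_smul_left, dotp_comm]
lemma eNorm_smul (c : ℝ) (a : Fin n → ℝ) : eNorm (c • a) = |c| * eNorm a := by
  unfold eNorm
  rw [dotp_smul_left, dotp_smul_right, ← mul_assoc, ← sq, Real.sqrt_mul (sq_nonneg c),
    Real.sqrt_sq_eq_abs]
lemma eNorm_add_le (a b : Fin n → ℝ) : eNorm (a + b) ≤ eNorm a + eNorm b := by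
  have h1 : dotp (a+b) (a+b) = dotp a a + 2 * dotp a b + dotp b b := by
    rw [dotp_add_left, dotp_comm a (a+b), dotp_add_left, dotp_comm b (a+b), dotp_add_left]
    rw [dotp_comm b a]; ring
  have h2 : dotp (a+b) (a+b) ≤ (eNorm a + eNorm b)^2 := by
    rw [h1]
    have := dotp_le a b
    nlinarith [eNorm_sq a, eNorm_sq b]
  calc eNorm (a+b) = Real.sqrt (dotp (a+b) (a+b)) := rfl
    _ ≤ Real.sqrt ((eNorm a + eNorm b)^2) := Real.sqrt_le_sqrt h2
    _ = eNorm a + eNorm b := Real.sqrt_sq (add_nonneg (eNorm_nonneg a) (eNorm_nonneg b))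
lemma coord_le_eNorm (a : Fin n → ℝ) (i : Fin n) : |a i| ≤ eNorm a := by
  have h1 : a i ^ 2 ≤ dotp a a := by
    have h0 : ∀ j ∈ Finset.univ, 0 ≤ a j * a j := fun j _ => mul_self_nonneg _
    have := Finset.single_le_sum h0 (Finset.mem_univ i)
    simpa [sq, dotp] using this
  calc |a i| = Real.sqrt (a i ^ 2) := (Real.sqrt_sq_eq_abs _).symm
    _ ≤ _ := Real.sqrt_le_sqrt h1
lemma pinorm_le_eNorm (a : Fin n → ℝ) : ‖a‖ ≤ eNorm a := by
  apply pi_norm_le_iff_of_nonneg (eNorm_nonneg a) |>.2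
  intro i
  rw [Real.norm_eq_abs]
  exact coord_le_eNorm a i
lemma eNorm_le_card_norm (a : Fin n → ℝ) : eNorm a ≤ n * ‖a‖ := by
  have h1 : dotp a a ≤ (n : ℝ) * ‖a‖^2 := by
    calc dotp a a = ∑ i, a i * a i := rfl
      _ ≤ ∑ _i : Fin n, ‖a‖^2 := by
          apply Finset.sum_le_sum
          intro i _
          have := norm_le_pi_norm a i
          rw [Real.norm_eq_abs] at this
          nlinarith [abs_nonneg (a i), abs_mul_abs_self (a i)]
      _ = (n : ℝ) * ‖a‖^2 := by simp [Finset.sum_const, Finset.card_univ]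
  calc eNorm a = Real.sqrt (dotp a a) := rfl
    _ ≤ Real.sqrt ((n:ℝ) * ‖a‖^2) := Real.sqrt_le_sqrt h1
    _ ≤ Real.sqrt (((n:ℝ) * ‖a‖)^2) := by
        apply Real.sqrt_le_sqrt
        have h2 : (1:ℝ) ≤ n ∨ (n:ℝ) = 0 := by
          rcases Nat.eq_zero_or_pos n with h | h
          · exact Or.inr (by exact_mod_cast h)
          · exact Or.inl (by exact_mod_cast h)
        rcases h2 with h | h
        · nlinarith [norm_nonneg a, sq_nonneg ‖a‖]
        · simp [h]
    _ = (n:ℝ) * ‖a‖ := Real.sqrt_sq (by positivity)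

lemma clm_apply_eq_dotp (L : (Fin n → ℝ) →L[ℝ] ℝ) (v : Fin n → ℝ) :
    L v = ∑ i, v i * L (Pi.single i 1) := by
  have hv : v = ∑ i, (v i) • (Pi.single i 1 : Fin n → ℝ) := by
    funext j
    simp [Finset.sum_apply, Pi.single_apply]
  conv_lhs => rw [hv]
  rw [map_sum]
  simp [smul_eq_mul]

lemma posdef_sum {M : Matrix (Fin n) (Fin n) ℝ} (hM : M.PosDef) {w : Fin n → ℝ} (hw : w ≠ 0) :
    0 < ∑ j, w j * ∑ i, w i * M i j := by
  have h := hM.dotProduct_mulVec_pos hw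
  have e : dotProduct (star w) (M.mulVec w) = ∑ j, w j * ∑ i, w i * M i j := by
    simp only [dotProduct, Matrix.mulVec, star_trivial, Finset.mul_sum]
    rw [Finset.sum_comm]
    apply Finset.sum_congr rfl; intro j _
    apply Finset.sum_congr rfl; intro i _
    ring
  rw [e] at h; exact h

section Phi
variable {Φ : (Fin n → ℝ) → ℝ}

lemma innerNormal_eq_smul (x : Fin n → ℝ) :
    innerNormal Φ x = (-(1 / eNorm (gradv Φ x))) • gradv Φ x := by
  funext i
  simp [innerNormal, div_eq_mul_inv, neg_div]
  ring

lemma dotp_innerNormal (a x : Fin n → ℝ) :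
    dotp a (innerNormal Φ x) = -(1 / eNorm (gradv Φ x)) * dotp a (gradv Φ x) := by
  rw [innerNormal_eq_smul, dotp_smul_right]

lemma dotp_innerNormal_self {x : Fin n → ℝ} (h : gradv Φ x ≠ 0) :
    dotp (innerNormal Φ x) (innerNormal Φ x) = 1 := by
  rw [innerNormal_eq_smul, dotp_smul_left, dotp_smul_right]
  have h1 : eNorm (gradv Φ x) ≠ 0 := ne_of_gt (eNorm_pos h)
  have h2 : dotp (gradv Φ x) (gradv Φ x) = eNorm (gradv Φ x) ^ 2 := (eNorm_sq _).symm
  rw [h2]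
  field_simp

lemma eNorm_innerNormal {x : Fin n → ℝ} (h : gradv Φ x ≠ 0) :
    eNorm (innerNormal Φ x) = 1 := by
  unfold eNorm
  rw [dotp_innerNormal_self h, Real.sqrt_one]

lemma tangent_orth {x τ : Fin n → ℝ} (h : gradv Φ x ≠ 0)
    (ht : dotp τ (innerNormal Φ x) = 0) : dotp τ (gradv Φ x) = 0 := by
  rw [dotp_innerNormal] at ht
  have h1 : eNorm (gradv Φ x) ≠ 0 := ne_of_gt (eNorm_pos h)
  rcases mul_eq_zero.1 ht with h2 | h2
  · exfalso; apply h1; field_simp at h2; simp at h2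
  · exact h2

lemma gradv_coord_contDiff (hΦ : ContDiff ℝ (⊤ : ℕ∞) Φ) (i : Fin n) :
    ContDiff ℝ (⊤ : ℕ∞) (fun x => gradv Φ x i) :=
  (hΦ.fderiv_right (by exact_mod_cast le_top)).clm_apply contDiff_const

lemma gradv_continuous (hΦ : ContDiff ℝ (⊤ : ℕ∞) Φ) :
    Continuous (fun x => gradv Φ x) := by
  apply continuous_pi
  intro i
  exact (gradv_coord_contDiff hΦ i).continuous

lemma dotp_gradv_contDiff (hΦ : ContDiff ℝ (⊤ : ℕ∞) Φ) :
    ContDiff ℝ (⊤ : ℕ∞) (fun x => dotp (gradv Φ x) (gradv Φ x)) := by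
  unfold dotp
  apply ContDiff.sum
  intro i _
  exact (gradv_coord_contDiff hΦ i).mul (gradv_coord_contDiff hΦ i)

lemma innerNormal_contDiffAt (hΦ : ContDiff ℝ (⊤ : ℕ∞) Φ) {x : Fin n → ℝ}
    (h : gradv Φ x ≠ 0) (i : Fin n) :
    ContDiffAt ℝ (⊤ : ℕ∞) (fun y => innerNormal Φ y i) x := by
  have hq : ContDiffAt ℝ (⊤ : ℕ∞) (fun y => dotp (gradv Φ y) (gradv Φ y)) x :=
    (dotp_gradv_contDiff hΦ).contDiffAt
  have hqx : dotp (gradv Φ x) (gradv Φ x) ≠ 0 := ne_of_gt (dotp_self_pos h)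
  have hsq : ContDiffAt ℝ (⊤ : ℕ∞) (fun y => eNorm (gradv Φ y)) x := by
    exact (Real.contDiffAt_sqrt (n := ((⊤:ℕ∞) : WithTop ℕ∞)) hqx).comp x hq
  have hnum : ContDiffAt ℝ (⊤ : ℕ∞) (fun y => -(gradv Φ y i)) x :=
    ((gradv_coord_contDiff hΦ i).neg).contDiffAt
  have hden : eNorm (gradv Φ x) ≠ 0 := ne_of_gt (eNorm_pos h)
  exact hnum.div hsq hden

end Phi

lemma grad_ineq {v : (Fin n → ℝ) → ℝ} (hv : ContDiff ℝ (⊤ : ℕ∞) v)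
    {K : Set (Fin n → ℝ)} (hK : Convex ℝ K)
    (hpos : ∀ p ∈ K, (hessM v p).PosDef) :
    ∀ y ∈ K, ∀ z ∈ K, v y + dotp (z - y) (gradv v y) ≤ v z := by
  intro y hy z hz
  rcases eq_or_ne z y with rfl | hzy
  · simp [dotp]
  set w : Fin n → ℝ := z - y with hwdef
  have hw0 : w ≠ 0 := sub_ne_zero.2 hzy
  set c : ℝ → (Fin n → ℝ) := fun s => y + s • w with hcdef
  have hc0 : c 0 = y := by simp [hcdef]
  have hc1 : c 1 = z := by simp [hcdef, hwdef]
  have hcK : ∀ s ∈ Icc (0:ℝ) 1, c s ∈ K := by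
    intro s hs
    have h := hK hy hz (by linarith [hs.2] : (0:ℝ) ≤ 1 - s) hs.1 (by ring)
    have : (1 - s) • y + s • z = c s := by
      simp only [hcdef, hwdef, smul_sub, sub_smul, one_smul]
      abel
    rwa [this] at h
  have hcD : ∀ s : ℝ, HasDerivAt c w s := by
    intro s
    simpa [hcdef] using (((hasDerivAt_id s).smul_const w).const_add y)
  have hvdiff : Differentiable ℝ v := hv.differentiable (by simp)
  set Dj : Fin n → (Fin n → ℝ) → ℝ := fun j p => fderiv ℝ v p (Pi.single j 1) with hDjdef
  have hDjc : ∀ j, ContDiff ℝ (⊤ : ℕ∞) (Dj j) := by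
    intro j
    exact (hv.fderiv_right (by exact_mod_cast le_top)).clm_apply contDiff_const
  set G : ℝ → ℝ := fun s => ∑ j, w j * Dj j (c s) with hGdef
  have hgG : ∀ s : ℝ, HasDerivAt (fun s => v (c s)) (G s) s := by
    intro s
    have h1 : HasDerivAt (fun s => v (c s)) (fderiv ℝ v (c s) w) s :=
      (hvdiff (c s)).hasFDerivAt.comp_hasDerivAt s (hcD s)
    have : fderiv ℝ v (c s) w = G s := clm_apply_eq_dotp _ w
    rwa [this] at h1
  set Q : ℝ → ℝ := fun s => ∑ j, w j * ∑ i, w i * hessM v (c s) i j with hQdef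
  have hGQ : ∀ s : ℝ, HasDerivAt G (Q s) s := by
    intro s
    apply HasDerivAt.fun_sum
    intro j _
    apply HasDerivAt.const_mul
    have h1 : HasDerivAt (fun s => Dj j (c s)) (fderiv ℝ (Dj j) (c s) w) s :=
      (((hDjc j).differentiable (by simp)) (c s)).hasFDerivAt.comp_hasDerivAt
        s (hcD s)
    have : fderiv ℝ (Dj j) (c s) w = ∑ i, w i * hessM v (c s) i j :=
      clm_apply_eq_dotp _ w
    rwa [this] at h1
  have hQpos : ∀ s ∈ Icc (0:ℝ) 1, 0 < Q s := fun s hs =>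
    posdef_sum (hpos _ (hcK s hs)) hw0
  have hGmono : StrictMonoOn G (Icc (0:ℝ) 1) := by
    apply strictMonoOn_of_deriv_pos (convex_Icc 0 1)
    · exact fun s _ => ((hGQ s).differentiableAt.continuousAt).continuousWithinAt
    · intro s hs
      rw [interior_Icc] at hs
      rw [(hGQ s).deriv]
      exact hQpos s ⟨le_of_lt hs.1, le_of_lt hs.2⟩
  obtain ⟨ξ, hξ, hslope⟩ := exists_hasDerivAt_eq_slope (fun s => v (c s)) G
    (by norm_num : (0:ℝ) < 1)
    (fun s _ => ((hgG s).differentiableAt.continuousAt).continuousWithinAt)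
    (fun s _ => hgG s)
  have hG0 : G 0 = dotp (z - y) (gradv v y) := by
    simp only [hGdef, hc0, dotp, hwdef]
    rfl
  have hGle : G 0 ≤ G ξ :=
    le_of_lt (hGmono ⟨le_refl 0, by norm_num⟩ ⟨le_of_lt hξ.1, le_of_lt hξ.2⟩ hξ.1)
  rw [hc1, hc0] at hslope
  have : v z - v y = G ξ := by rw [hslope]; ring
  linarith [hG0 ▸ hGle]

lemma hess_cont_in_t {u : (Fin n → ℝ) → ℝ → ℝ}
    (hu : ContDiff ℝ (⊤ : ℕ∞) (fun p : (Fin n → ℝ) × ℝ => u p.1 p.2))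
    (x : Fin n → ℝ) (i j : Fin n) :
    Continuous (fun t => hessM (fun y => u y t) x i j) := by
  have hA : ContDiff ℝ (⊤ : ℕ∞)
      (fun p : ℝ × (Fin n → ℝ) => fderiv ℝ (fun z => u z p.1) p.2 (Pi.single j 1)) := by
    apply ContDiff.fderiv_apply
      (f := fun (p : ℝ × (Fin n → ℝ)) (z : Fin n → ℝ) => u z p.1)
      (g := fun p => p.2) (k := fun _ => Pi.single j 1)
    · exact hu.comp (contDiff_snd.prodMk (contDiff_fst.comp contDiff_fst))
    · exact contDiff_snd
    · exact contDiff_const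
    · exact_mod_cast le_top
  have hB : ContDiff ℝ (⊤ : ℕ∞)
      (fun t : ℝ => fderiv ℝ (fun y => fderiv ℝ (fun z => u z t) y (Pi.single j 1)) x
        (Pi.single i 1)) := by
    apply ContDiff.fderiv_apply
      (f := fun (t : ℝ) (y : Fin n → ℝ) => fderiv ℝ (fun z => u z t) y (Pi.single j 1))
      (g := fun _ => x) (k := fun _ => Pi.single i 1)
    · exact hA
    · exact contDiff_const
    · exact contDiff_const
    · exact_mod_cast le_top
  exact hB.continuous

end MixedC2Aux

set_option maxHeartbeats 2000000 in
open MixedC2Aux in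
/-- Lemma 5.1 (Mixed C²-estimates at the boundary): `|u_{τν}| ≤ C` on `∂Ω`,
uniformly in time, for solutions of the flow. -/
theorem mixed_C2_boundary_estimate
    (n : ℕ) (hn : 2 ≤ n)
    (Φ : (Fin n → ℝ) → ℝ) (Ω : Set (Fin n → ℝ))
    (hΦ : ContDiff ℝ (⊤ : ℕ∞) Φ)
    (hΦconv : ∀ x, (hessM Φ x).PosDef)
    (hΩdef : Ω = {x | Φ x < 0})
    (hΩbd : Bornology.IsBounded Ω)
    (hfr : frontier Ω = {x | Φ x = 0})
    (hΦgrad : ∀ x ∈ frontier Ω, gradv Φ x ≠ 0)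
    (f : (Fin n → ℝ) → (Fin n → ℝ) → ℝ)
    (hf : ContDiff ℝ (⊤ : ℕ∞) (fun p : (Fin n → ℝ) × (Fin n → ℝ) => f p.1 p.2))
    (hfpos : ∀ x p, 0 < f x p)
    (φ : (Fin n → ℝ) → ℝ) (hφ : ContDiff ℝ (⊤ : ℕ∞) φ)
    (u₀ : (Fin n → ℝ) → ℝ) (hu₀ : ContDiff ℝ (⊤ : ℕ∞) u₀)
    (hu₀conv : ∀ x ∈ closure Ω, (hessM u₀ x).PosDef)
    (hu₀bc : ∀ x ∈ frontier Ω, dotp (gradv u₀ x) (innerNormal Φ x) = φ x)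
 :
    ∃ C : ℝ, ∀ T : ℝ, 0 < T → ∀ u : (Fin n → ℝ) → ℝ → ℝ,
      IsFlowSol Ω Φ f φ T u →
      (∀ x ∈ closure Ω, u x 0 = u₀ x) →
      ∀ x ∈ frontier Ω, ∀ t ∈ Icc (0:ℝ) T,
        ∀ τ : Fin n → ℝ, eNorm τ = 1 → dotp τ (innerNormal Φ x) = 0 →
          |dotp ((hessM (fun y => u y t) x).mulVec τ) (innerNormal Φ x)| ≤ C := by
  classical
  -- Basic topological facts
  have hΩopen : IsOpen Ω := by
    rw [hΩdef]; exact isOpen_lt hΦ.continuous continuous_const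
  have hKb : Bornology.IsBounded (closure Ω) := hΩbd.closure
  have hKcpt : IsCompact (closure Ω) := Metric.isCompact_of_isClosed_isBounded isClosed_closure hKb
  have hfrsub : frontier Ω ⊆ closure Ω := frontier_subset_closure
  have hfrcpt : IsCompact (frontier Ω) :=
    hKcpt.of_isClosed_subset isClosed_frontier hfrsub
  -- Convexity of the closure
  have hΦineq := grad_ineq hΦ convex_univ (fun p _ => hΦconv p)
  have hΩconv : Convex ℝ Ω := by
    intro a ha b hb s t hs ht hst
    rw [hΩdef] at ha hb ⊢
    set m := s • a + t • b with hm
    have h1 : Φ m + dotp (a - m) (gradv Φ m) ≤ Φ a := hΦineq m trivial a trivial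
    have h2 : Φ m + dotp (b - m) (gradv Φ m) ≤ Φ b := hΦineq m trivial b trivial
    have h3 : s * dotp (a - m) (gradv Φ m) + t * dotp (b - m) (gradv Φ m) = 0 := by
      rw [← dotp_smul_left, ← dotp_smul_left, ← dotp_add_left]
      have e1 : s • (a - m) + t • (b - m) = (s • a + t • b) - (s + t) • m := by
        rw [add_smul, smul_sub, smul_sub]
        abel
      have e2 : s • (a - m) + t • (b - m) = 0 := by
        rw [e1, hst, one_smul, ← hm, sub_self]
      rw [e2]
      simp [dotp]
    have hsum := add_le_add (mul_le_mul_of_nonneg_left h1 hs) (mul_le_mul_of_nonneg_left h2 ht)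
    simp only [mul_add] at hsum
    have hΦm : Φ m = s * Φ m + t * Φ m := by rw [← add_mul, hst, one_mul]
    have ha' : Φ a < 0 := ha
    have hb' : Φ b < 0 := hb
    have hneg : s * Φ a + t * Φ b < 0 := by
      rcases eq_or_lt_of_le hs with hs0 | hs0
      · have ht1 : t = 1 := by linarith
        rw [← hs0, ht1]; simpa using hb'
      · have h4 : s * Φ a < 0 := mul_neg_of_pos_of_neg hs0 ha'
        have h5 : t * Φ b ≤ 0 := mul_nonpos_of_nonneg_of_nonpos ht (le_of_lt hb')
        linarith
    show Φ m < 0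
    linarith
  have hKconv : Convex ℝ (closure Ω) := hΩconv.closure
  -- continuity of dotp-type expressions
  have hdotp_cont : ∀ {α : Type} [TopologicalSpace α] (g h : α → (Fin n → ℝ)),
      Continuous g → Continuous h → Continuous (fun p => dotp (g p) (h p)) := by
    intro α _ g h hg hh
    unfold dotp
    exact continuous_finset_sum _ fun i _ =>
      ((continuous_apply i).comp hg).mul ((continuous_apply i).comp hh)
  -- the compact set of unit tangent vectors at boundary points
  set S : Set ((Fin n → ℝ) × (Fin n → ℝ)) :=
    {p | p.1 ∈ frontier Ω ∧ dotp p.2 p.2 = 1 ∧ dotp p.2 (gradv Φ p.1) = 0} with hSdef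
  have hmemS : ∀ x ∈ frontier Ω, ∀ τ : Fin n → ℝ, eNorm τ = 1 →
      dotp τ (innerNormal Φ x) = 0 → (x, τ) ∈ S := by
    intro x hx τ h1 h2
    refine ⟨hx, ?_, tangent_orth (hΦgrad x hx) h2⟩
    have h3 := congrArg (· ^ 2) h1
    simpa [eNorm_sq] using h3
  by_cases hS : S.Nonempty
  swap
  · exact ⟨0, fun T hT u hu hinit x hx t ht τ hτ1 hτ2 =>
      absurd ⟨(x, τ), hmemS x hx τ hτ1 hτ2⟩ hS⟩
  -- S is compact
  have hScl : IsClosed S := by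
    have h1 : IsClosed {p : (Fin n → ℝ) × (Fin n → ℝ) | p.1 ∈ frontier Ω} :=
      isClosed_frontier.preimage continuous_fst
    have h2 : IsClosed {p : (Fin n → ℝ) × (Fin n → ℝ) | dotp p.2 p.2 = 1} :=
      isClosed_eq (hdotp_cont _ _ continuous_snd continuous_snd) continuous_const
    have h3 : IsClosed {p : (Fin n → ℝ) × (Fin n → ℝ) | dotp p.2 (gradv Φ p.1) = 0} :=
      isClosed_eq (hdotp_cont _ _ continuous_snd ((gradv_continuous hΦ).comp continuous_fst))
        continuous_const
    have hSe : S = {p : (Fin n → ℝ) × (Fin n → ℝ) | p.1 ∈ frontier Ω} ∩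
        ({p | dotp p.2 p.2 = 1} ∩ {p | dotp p.2 (gradv Φ p.1) = 0}) := by
      ext p; simp [hSdef, and_assoc]
    rw [hSe]
    exact h1.inter (h2.inter h3)
  have hSbd : Bornology.IsBounded S := by
    apply Bornology.IsBounded.subset ((hΩbd.closure).prod (Metric.isBounded_closedBall
      (x := (0 : Fin n → ℝ)) (r := 1)))
    rintro ⟨x, τ⟩ ⟨h1, h2, _⟩
    constructor
    · exact hfrsub h1
    · rw [Metric.mem_closedBall, dist_zero_right]
      have : eNorm τ = 1 := by rw [eNorm, h2, Real.sqrt_one]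
      calc ‖τ‖ ≤ eNorm τ := pinorm_le_eNorm τ
        _ = 1 := this
  have hScpt : IsCompact S := Metric.isCompact_of_isClosed_isBounded hScl hSbd
  -- inward bending: at every unit tangent vector there is a domain point making
  -- positive inner product
  have hwit : ∀ p ∈ S, ∃ z ∈ closure Ω, 0 < dotp p.2 (z - p.1) := by
    rintro ⟨x, τ⟩ ⟨hpf, hpτ, hpt⟩
    have hg0 : gradv Φ x ≠ 0 := hΦgrad x hpf
    set w : Fin n → ℝ := τ - gradv Φ x with hw
    have hΦx : Φ x = 0 := by
      have := hfr ▸ hpf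
      exact this
    set ψ : ℝ → ℝ := fun s => Φ (x + s • w) with hψ
    have hψ0 : ψ 0 = 0 := by simp [hψ, hΦx]
    set d : ℝ := dotp w (gradv Φ x) with hd
    have hdneg : d < 0 := by
      rw [hd, hw, dotp_sub_left, hpt]
      simpa using dotp_self_pos hg0
    have hψd : HasDerivAt ψ d 0 := by
      have hc : HasDerivAt (fun s : ℝ => x + s • w) w 0 := by
        simpa using (((hasDerivAt_id (0:ℝ)).smul_const w).const_add x)
      have h1 := (hΦ.differentiable (by simp)
        (x + (0:ℝ) • w)).hasFDerivAt.comp_hasDerivAt 0 hc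
      have h2 : fderiv ℝ Φ (x + (0:ℝ) • w) w = d := by
        have hx0 : x + (0:ℝ) • w = x := by simp
        rw [hx0, clm_apply_eq_dotp]
        rfl
      rw [h2] at h1
      exact h1
    have hslope : Filter.Tendsto (slope ψ 0) (𝓝[>] (0:ℝ)) (𝓝 d) :=
      (hasDerivAt_iff_tendsto_slope.1 hψd).mono_left
        (nhdsWithin_mono 0 (fun s hs => ne_of_gt hs))
    have hev : ∀ᶠ s in 𝓝[>] (0:ℝ), slope ψ 0 s < 0 :=
      hslope.eventually_lt_const hdneg
    obtain ⟨s, hsl, hs0⟩ := (hev.and self_mem_nhdsWithin).exists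
    have hs0' : (0:ℝ) < s := hs0
    have hψs : ψ s < 0 := by
      have h1 : slope ψ 0 s = ψ s / s := by
        rw [slope_def_field, hψ0, sub_zero, sub_zero]
      rw [h1] at hsl
      by_contra h2
      push_neg at h2
      have := div_nonneg h2 (le_of_lt hs0')
      linarith
    refine ⟨x + s • w, subset_closure (by rw [hΩdef]; exact hψs), ?_⟩
    have he : (x + s • w) - x = s • w := by abel
    rw [he, dotp_smul_right]
    have hτw : dotp τ w = 1 := by
      rw [hw, dotp_sub_right, hpτ, hpt]
      ring
    rw [hτw]
    simpa using hs0'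
  -- uniform positive lower bound by a finite covering argument
  obtain ⟨co, hcopos, hco⟩ : ∃ co : ℝ, 0 < co ∧
      ∀ p ∈ S, ∃ z ∈ closure Ω, co ≤ dotp p.2 (z - p.1) := by
    choose! z hzK hzpos using hwit
    set Ufam : {p // p ∈ S} → Set ((Fin n → ℝ) × (Fin n → ℝ)) :=
      fun i => {q | dotp i.1.2 (z i.1 - i.1.1) / 2 < dotp q.2 (z i.1 - q.1)} with hUdef
    have hUopen : ∀ i, IsOpen (Ufam i) := by
      intro i
      exact isOpen_lt continuous_const
        (hdotp_cont _ _ continuous_snd (continuous_const.sub continuous_fst))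
    have hScov : S ⊆ ⋃ i, Ufam i := by
      intro p hp
      exact mem_iUnion.2 ⟨⟨p, hp⟩, by
        simp only [hUdef, mem_setOf_eq]
        linarith [hzpos p hp]⟩
    obtain ⟨tf, htf⟩ := hScpt.elim_finite_subcover Ufam hUopen hScov
    obtain ⟨p₀, hp₀⟩ := hS
    have htfne : tf.Nonempty := by
      have := htf hp₀
      rw [mem_iUnion₂] at this
      obtain ⟨i, hi, _⟩ := this
      exact ⟨i, hi⟩
    refine ⟨tf.inf' htfne (fun i => dotp i.1.2 (z i.1 - i.1.1) / 2), ?_, ?_⟩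
    · rw [Finset.lt_inf'_iff]
      intro i _
      linarith [hzpos i.1 i.2]
    · intro p hp
      have := htf hp
      rw [mem_iUnion₂] at this
      obtain ⟨i, hi, hpi⟩ := this
      refine ⟨z i.1, hzK i.1 i.2, ?_⟩
      calc tf.inf' htfne (fun i => dotp i.1.2 (z i.1 - i.1.1) / 2)
          ≤ dotp i.1.2 (z i.1 - i.1.1) / 2 := Finset.inf'_le _ hi
        _ ≤ dotp p.2 (z i.1 - p.1) := le_of_lt hpi
  -- bound on |φ| over the boundary
  obtain ⟨M0, hM0⟩ : ∃ M0 : ℝ, ∀ y ∈ frontier Ω, |φ y| ≤ M0 := by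
    obtain ⟨M0, hM0⟩ := hfrcpt.exists_bound_of_continuousOn hφ.continuous.continuousOn
    exact ⟨M0, fun y hy => by simpa [Real.norm_eq_abs] using hM0 y hy⟩
  set M : ℝ := max M0 0 with hMdef
  have hM : ∀ y ∈ frontier Ω, |φ y| ≤ M := fun y hy => (hM0 y hy).trans (le_max_left _ _)
  have hMnn : 0 ≤ M := le_max_right _ _
  -- bound on euclidean distances inside the closure
  obtain ⟨eD, heDnn, heD⟩ : ∃ eD : ℝ, 0 ≤ eD ∧
      ∀ y ∈ closure Ω, ∀ z ∈ closure Ω, eNorm (z - y) ≤ eD := by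
    obtain ⟨r, hr⟩ := hKb.subset_closedBall 0
    refine ⟨max (n * (2 * r)) 0, le_max_right _ _, ?_⟩
    intro y hy z hz
    have hy' : ‖y‖ ≤ r := by simpa [Metric.mem_closedBall, dist_zero_right] using hr hy
    have hz' : ‖z‖ ≤ r := by simpa [Metric.mem_closedBall, dist_zero_right] using hr hz
    have h1 : ‖z - y‖ ≤ 2 * r := by
      calc ‖z - y‖ ≤ ‖z‖ + ‖y‖ := norm_sub_le z y
        _ ≤ 2 * r := by linarith
    calc eNorm (z - y) ≤ n * ‖z - y‖ := eNorm_le_card_norm _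
      _ ≤ n * (2 * r) := by
          apply mul_le_mul_of_nonneg_left h1 (by positivity)
      _ ≤ max (n * (2 * r)) 0 := le_max_left _ _
  -- bound on the derivative of φ over the boundary
  obtain ⟨Kφ, hKφnn, hKφ⟩ : ∃ Kφ : ℝ, 0 ≤ Kφ ∧ ∀ y ∈ frontier Ω, ‖fderiv ℝ φ y‖ ≤ Kφ := by
    obtain ⟨M1, hM1⟩ := hfrcpt.exists_bound_of_continuousOn
      ((hφ.fderiv_right (m := (⊤:ℕ∞)) (by exact_mod_cast le_top)).continuous.continuousOn)
    exact ⟨max M1 0, le_max_right _ _, fun y hy => (hM1 y hy).trans (le_max_left _ _)⟩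
  -- bound on the derivative of the inner normal over the boundary
  obtain ⟨KN, hKNnn, hKN⟩ : ∃ KN : ℝ, 0 ≤ KN ∧ ∀ y ∈ frontier Ω,
      ∑ i, ‖fderiv ℝ (fun z => innerNormal Φ z i) y‖ ≤ KN := by
    set U : Set (Fin n → ℝ) := (fun y => gradv Φ y) ⁻¹' ({0}ᶜ) with hUdef
    have hUopen : IsOpen U := (isOpen_compl_singleton).preimage (gradv_continuous hΦ)
    have hfrU : frontier Ω ⊆ U := fun y hy => hΦgrad y hy
    have hcont : ∀ i : Fin n, ContinuousOn (fun y => fderiv ℝ (fun z => innerNormal Φ z i) y)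
        (frontier Ω) := by
      intro i
      apply ContinuousOn.mono _ hfrU
      have hCD : ContDiffOn ℝ (⊤ : ℕ∞) (fun z => innerNormal Φ z i) U := fun y hy =>
        (innerNormal_contDiffAt hΦ hy i).contDiffWithinAt
      exact hCD.continuousOn_fderiv_of_isOpen hUopen (by exact_mod_cast le_top)
    have hcont2 : ContinuousOn
        (fun y => ∑ i, ‖fderiv ℝ (fun z => innerNormal Φ z i) y‖) (frontier Ω) := by
      apply continuousOn_finset_sum
      intro i _
      exact (hcont i).norm
    obtain ⟨M2, hM2⟩ := hfrcpt.exists_bound_of_continuousOn hcont2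
    refine ⟨max M2 0, le_max_right _ _, fun y hy => ?_⟩
    have := hM2 y hy
    rw [Real.norm_eq_abs] at this
    exact (le_abs_self _).trans (this.trans (le_max_left _ _))
  -- the global constants
  set G0 : ℝ := M + M * eD / co with hG0def
  have hG0nn : 0 ≤ G0 := by positivity
  set Gb : ℝ := M + (G0 + M) * eD / co with hGbdef
  have hGbnn : 0 ≤ Gb := by positivity
  refine ⟨Kφ + Gb * KN, ?_⟩
  intro T hT u hu hinit
  obtain ⟨husm, hupos, _, hubc⟩ := hu
  -- ####################  the main estimate for t ∈ (0, T]  ####################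
  have key : ∀ t ∈ Ioc (0:ℝ) T, ∀ x ∈ frontier Ω, ∀ τ : Fin n → ℝ, eNorm τ = 1 →
      dotp τ (innerNormal Φ x) = 0 →
      |dotp ((hessM (fun y => u y t) x).mulVec τ) (innerNormal Φ x)| ≤ Kφ + Gb * KN := by
    intro t ht
    set v : (Fin n → ℝ) → ℝ := fun y => u y t with hvdef
    have hv : ContDiff ℝ (⊤ : ℕ∞) v := husm.comp (contDiff_id.prodMk contDiff_const)
    have hvpos : ∀ p ∈ closure Ω, (hessM v p).PosDef :=
      hupos t ⟨le_of_lt ht.1, ht.2⟩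
    have hvineq := grad_ineq hv hKconv hvpos
    have hvbc : ∀ y ∈ frontier Ω, dotp (gradv v y) (innerNormal Φ y) = φ y := hubc t ht
    -- uniform bound on the norm of tangential part of the gradient at boundary points
    have hbnd : ∀ x' ∈ frontier Ω, ∀ B : ℝ, 0 ≤ B →
        (∀ z ∈ closure Ω, dotp (z - x') (gradv v x') ≤ B) →
        eNorm (gradv v x') ≤ M + (B + M * eD) / co := by
      intro x' hx' B hB hzB
      have hgx' : gradv Φ x' ≠ 0 := hΦgrad x' hx'
      set νx : Fin n → ℝ := innerNormal Φ x' with hνx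
      have hνν : dotp νx νx = 1 := dotp_innerNormal_self hgx'
      have hνe : eNorm νx = 1 := eNorm_innerNormal hgx'
      set Tv : Fin n → ℝ := gradv v x' - (φ x') • νx with hTv
      have hgrad_eq : gradv v x' = Tv + (φ x') • νx := by rw [hTv]; abel
      have hTν : dotp Tv νx = 0 := by
        rw [hTv, dotp_sub_left, dotp_smul_left, hνν, hvbc x' hx']
        ring
      have hM' : |φ x'| ≤ M := hM x' hx'
      have hquot : 0 ≤ (B + M * eD) / co :=
        div_nonneg (by positivity) (le_of_lt hcopos)
      by_cases hT0 : Tv = 0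
      · rw [hgrad_eq, hT0, zero_add, eNorm_smul, hνe, mul_one]
        linarith
      · set e : ℝ := eNorm Tv with he
        have hepos : 0 < e := eNorm_pos hT0
        set τ' : Fin n → ℝ := (1 / e) • Tv with hτ'
        have hττ : dotp τ' τ' = 1 := by
          rw [hτ', dotp_smul_left, dotp_smul_right, ← eNorm_sq, ← he]
          have hene : e ≠ 0 := ne_of_gt hepos
          field_simp
        have hτS : (x', τ') ∈ S := by
          refine ⟨hx', hττ, ?_⟩
          rw [hτ', dotp_smul_left, tangent_orth hgx' hTν, mul_zero]
        obtain ⟨z, hzK, hzc⟩ := hco (x', τ') hτS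
        have hTvτ : dotp (z - x') Tv = e * dotp τ' (z - x') := by
          rw [hτ', dotp_smul_left, dotp_comm]
          field_simp
        have h1 : dotp (z - x') (gradv v x') =
            dotp (z - x') Tv + (φ x') * dotp (z - x') νx := by
          rw [hgrad_eq, dotp_comm, dotp_add_left, dotp_smul_left, dotp_comm Tv, dotp_comm νx]
        have h2 : |(φ x') * dotp (z - x') νx| ≤ M * eD := by
          rw [abs_mul]
          apply mul_le_mul hM' _ (abs_nonneg _) hMnn
          calc |dotp (z - x') νx| ≤ eNorm (z - x') * eNorm νx := abs_dotp_le _ _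
            _ = eNorm (z - x') := by rw [hνe, mul_one]
            _ ≤ eD := heD x' (hfrsub hx') z hzK
        have h3 : e * co ≤ B + M * eD := by
          have h4 := hzB z hzK
          rw [h1, hTvτ] at h4
          nlinarith [abs_le.1 h2, mul_le_mul_of_nonneg_left hzc (le_of_lt hepos)]
        have h5 : e ≤ (B + M * eD) / co := by
          rw [le_div_iff₀ hcopos]
          exact h3
        calc eNorm (gradv v x') ≤ eNorm Tv + eNorm ((φ x') • νx) := by
              rw [hgrad_eq]; exact eNorm_add_le _ _
          _ = e + |φ x'| := by rw [eNorm_smul, hνe, mul_one, he]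
          _ ≤ M + (B + M * eD) / co := by linarith
    -- the maximum point of v over the closure
    obtain ⟨p₀, hp₀S⟩ := hS
    have hclne : (closure Ω).Nonempty := ⟨p₀.1, hfrsub hp₀S.1⟩
    obtain ⟨y₀, hy₀K, hy₀max⟩ := hKcpt.exists_isMaxOn hclne hv.continuous.continuousOn
    -- gradient bound at the maximum point
    have hgrad0 : eNorm (gradv v y₀) ≤ G0 := by
      by_cases hy₀f : y₀ ∈ frontier Ω
      · have h0 : ∀ z ∈ closure Ω, dotp (z - y₀) (gradv v y₀) ≤ 0 := by
          intro z hz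
          have := hvineq y₀ hy₀K z hz
          have h2 : v z ≤ v y₀ := hy₀max hz
          linarith
        have := hbnd y₀ hy₀f 0 (le_refl 0) h0
        rw [hG0def]
        calc eNorm (gradv v y₀) ≤ M + (0 + M * eD) / co := this
          _ = M + M * eD / co := by ring
      · have hy₀Ω : y₀ ∈ Ω := by
          rcases (hΩopen.frontier_eq ▸ hy₀f : y₀ ∉ closure Ω \ Ω) |> fun h => _ with _
          · by_contra h2
            exact hy₀f (hΩopen.frontier_eq ▸ ⟨hy₀K, h2⟩)
        have hlmax : IsLocalMax v y₀ :=
          Filter.eventually_of_mem (hΩopen.mem_nhds hy₀Ω)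
            (fun y hy => hy₀max (subset_closure hy))
        have hf0 : fderiv ℝ v y₀ = 0 := hlmax.fderiv_eq_zero
        have hg0 : gradv v y₀ = 0 := by
          funext i
          simp [gradv, hf0]
        rw [hg0]
        have : eNorm (0 : Fin n → ℝ) = 0 := by
          simp [eNorm, dotp]
        rw [this]
        exact hG0nn
    -- oscillation bound
    have hosc : ∀ z ∈ closure Ω, v y₀ - G0 * eD ≤ v z := by
      intro z hz
      have h1 := hvineq y₀ hy₀K z hz
      have h2 : |dotp (z - y₀) (gradv v y₀)| ≤ eD * G0 := by
        calc |dotp (z - y₀) (gradv v y₀)| ≤ eNorm (z - y₀) * eNorm (gradv v y₀) :=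
              abs_dotp_le _ _
          _ ≤ eD * G0 := by
              apply mul_le_mul (heD y₀ hy₀K z hz) hgrad0 (eNorm_nonneg _) heDnn
      nlinarith [abs_le.1 h2]
    -- gradient bound at every boundary point
    have hgradb : ∀ x' ∈ frontier Ω, eNorm (gradv v x') ≤ Gb := by
      intro x' hx'
      have hB : ∀ z ∈ closure Ω, dotp (z - x') (gradv v x') ≤ G0 * eD := by
        intro z hz
        have h1 := hvineq x' (hfrsub hx') z hz
        have h2 : v z ≤ v y₀ := hy₀max hz
        have h3 : v y₀ - G0 * eD ≤ v x' := hosc x' (hfrsub hx')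
        linarith
      have := hbnd x' hx' (G0 * eD) (by positivity) hB
      rw [hGbdef]
      calc eNorm (gradv v x') ≤ M + (G0 * eD + M * eD) / co := this
        _ = M + (G0 + M) * eD / co := by ring
    -- ############ the Lagrange multiplier identity at the boundary ############
    intro x hx τ hτ1 hτt
    have hgx : gradv Φ x ≠ 0 := hΦgrad x hx
    have hΦx : Φ x = 0 := by
      have hx2 := hx
      rw [hfr] at hx2
      exact hx2
    set νx : Fin n → ℝ := innerNormal Φ x with hνxdef
    set Gi : Fin n → (Fin n → ℝ) → ℝ := fun i y => fderiv ℝ v y (Pi.single i 1) with hGidef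
    have hGic : ∀ i, ContDiff ℝ (⊤ : ℕ∞) (Gi i) := fun i =>
      (hv.fderiv_right (by exact_mod_cast le_top)).clm_apply contDiff_const
    set g : (Fin n → ℝ) → ℝ :=
      fun y => (∑ i, Gi i y * innerNormal Φ y i) - φ y with hgdef
    have hgfr : ∀ y ∈ frontier Ω, g y = 0 := by
      intro y hy
      have := hvbc y hy
      rw [hgdef]
      simp only [sub_eq_zero]
      rw [← this]
      rfl
    have hgex : IsLocalExtrOn g {y | Φ y = Φ x} x := by
      right
      apply eventually_nhdsWithin_of_forall
      intro y hy
      have hyfr : y ∈ frontier Ω := by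
        rw [hfr]
        have h5 : Φ y = Φ x := hy
        show Φ y = 0
        rw [h5, hΦx]
      rw [hgfr y hyfr, hgfr x hx]
    have hgc : ContDiffAt ℝ (⊤ : ℕ∞) g x := by
      apply ContDiffAt.sub
      · apply ContDiffAt.sum
        intro i _
        exact ((hGic i).contDiffAt).mul (innerNormal_contDiffAt hΦ hgx i)
      · exact hφ.contDiffAt
    have hgd : HasStrictFDerivAt g (fderiv ℝ g x) x :=
      hgc.hasStrictFDerivAt (by simp)
    have hΦd : HasStrictFDerivAt Φ (fderiv ℝ Φ x) x :=
      hΦ.contDiffAt.hasStrictFDerivAt (by simp)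
    obtain ⟨a, b, hab, hsum⟩ := hgex.exists_multipliers_of_hasStrictFDerivAt_1d hΦd hgd
    have hΦτ : fderiv ℝ Φ x τ = 0 := by
      rw [clm_apply_eq_dotp]
      exact tangent_orth hgx hτt
    have hb : b ≠ 0 := by
      intro hb0
      have ha : a ≠ 0 := by
        intro ha0
        exact hab (by rw [ha0, hb0]; rfl)
      rw [hb0] at hsum
      simp only [zero_smul, add_zero] at hsum
      have hΦ0 : fderiv ℝ Φ x = 0 := by
        rcases smul_eq_zero.1 hsum with h | h
        · exact absurd h ha
        · exact h
      apply hgx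
      funext i
      simp [gradv, hΦ0]
    have hDgτ : fderiv ℝ g x τ = 0 := by
      have happ := congrArg (fun L : (Fin n → ℝ) →L[ℝ] ℝ => L τ) hsum
      simp only [ContinuousLinearMap.add_apply, ContinuousLinearMap.coe_smul',
        Pi.smul_apply, smul_eq_mul, ContinuousLinearMap.zero_apply] at happ
      rw [hΦτ, mul_zero, zero_add] at happ
      rcases mul_eq_zero.1 happ with h | h
      · exact absurd h hb
      · exact h
    -- compute the derivative of g explicitly
    have hNid : ∀ i, HasFDerivAt (fun y => innerNormal Φ y i)
        (fderiv ℝ (fun y => innerNormal Φ y i) x) x := fun i =>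
      ((innerNormal_contDiffAt hΦ hgx i).differentiableAt
        (by simp)).hasFDerivAt
    have hGid : ∀ i, HasFDerivAt (Gi i) (fderiv ℝ (Gi i) x) x := fun i =>
      (((hGic i).differentiable (by simp)) x).hasFDerivAt
    have hgD : HasFDerivAt g
        ((∑ i, ((Gi i x) • fderiv ℝ (fun y => innerNormal Φ y i) x +
          (innerNormal Φ x i) • fderiv ℝ (Gi i) x)) - fderiv ℝ φ x) x := by
      apply HasFDerivAt.sub _ ((hφ.differentiable (by simp)) x).hasFDerivAt
      exact HasFDerivAt.fun_sum (fun i _ => (hGid i).mul (hNid i))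
    have hgfd : fderiv ℝ g x = (∑ i, ((Gi i x) • fderiv ℝ (fun y => innerNormal Φ y i) x +
          (innerNormal Φ x i) • fderiv ℝ (Gi i) x)) - fderiv ℝ φ x := hgD.fderiv
    have hexp : (∑ i, (Gi i x * (fderiv ℝ (fun y => innerNormal Φ y i) x τ) +
          (innerNormal Φ x i) * (fderiv ℝ (Gi i) x τ))) - fderiv ℝ φ x τ = 0 := by
      rw [← hDgτ, hgfd]
      simp [ContinuousLinearMap.sum_apply]
    -- identify the Hessian term
    set H : Matrix (Fin n) (Fin n) ℝ := hessM v x with hHdef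
    have hHsymm : ∀ i j, H j i = H i j := by
      intro i j
      have := (hvpos x (hfrsub hx)).1.apply i j
      simpa using this
    have hGiτ : ∀ i, fderiv ℝ (Gi i) x τ = ∑ j, τ j * H j i := by
      intro i
      rw [clm_apply_eq_dotp]
      rfl
    have hident : dotp (H.mulVec τ) νx =
        ∑ i, (innerNormal Φ x i) * (fderiv ℝ (Gi i) x τ) := by
      calc dotp (H.mulVec τ) νx = ∑ i, (∑ j, H i j * τ j) * innerNormal Φ x i := by
            unfold dotp
            apply Finset.sum_congr rfl
            intro i _
            simp [Matrix.mulVec, dotProduct, hνxdef]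
        _ = ∑ i, (innerNormal Φ x i) * (∑ j, τ j * H j i) := by
            apply Finset.sum_congr rfl
            intro i _
            rw [Finset.sum_mul, Finset.mul_sum]
            apply Finset.sum_congr rfl
            intro j _
            rw [hHsymm i j]
            ring
        _ = ∑ i, (innerNormal Φ x i) * (fderiv ℝ (Gi i) x τ) := by
            apply Finset.sum_congr rfl
            intro i _
            rw [hGiτ i]
    have hkey : dotp (H.mulVec τ) νx = fderiv ℝ φ x τ -
        ∑ i, Gi i x * (fderiv ℝ (fun y => innerNormal Φ y i) x τ) := by
      rw [hident]
      have := hexp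
      rw [Finset.sum_add_distrib] at this
      linarith
    -- final bounds
    have hτn : ‖τ‖ ≤ 1 := by
      calc ‖τ‖ ≤ eNorm τ := pinorm_le_eNorm τ
        _ = 1 := hτ1
    have hb1 : |fderiv ℝ φ x τ| ≤ Kφ := by
      calc |fderiv ℝ φ x τ| = ‖fderiv ℝ φ x τ‖ := (Real.norm_eq_abs _).symm
        _ ≤ ‖fderiv ℝ φ x‖ * ‖τ‖ := (fderiv ℝ φ x).le_opNorm τ
        _ ≤ Kφ * 1 := mul_le_mul (hKφ x hx) hτn (norm_nonneg _) hKφnn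
        _ = Kφ := mul_one _
    have hb2 : |∑ i, Gi i x * (fderiv ℝ (fun y => innerNormal Φ y i) x τ)| ≤ Gb * KN := by
      calc |∑ i, Gi i x * (fderiv ℝ (fun y => innerNormal Φ y i) x τ)|
          ≤ ∑ i, |Gi i x * (fderiv ℝ (fun y => innerNormal Φ y i) x τ)| :=
            Finset.abs_sum_le_sum_abs _ _
        _ ≤ ∑ i, Gb * ‖fderiv ℝ (fun y => innerNormal Φ y i) x‖ := by
            apply Finset.sum_le_sum
            intro i _
            rw [abs_mul]
            have e1 : |Gi i x| ≤ Gb := by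
              calc |Gi i x| = |gradv v x i| := rfl
                _ ≤ eNorm (gradv v x) := coord_le_eNorm _ i
                _ ≤ Gb := hgradb x hx
            have e2 : |fderiv ℝ (fun y => innerNormal Φ y i) x τ| ≤
                ‖fderiv ℝ (fun y => innerNormal Φ y i) x‖ := by
              calc |fderiv ℝ (fun y => innerNormal Φ y i) x τ|
                  = ‖fderiv ℝ (fun y => innerNormal Φ y i) x τ‖ := (Real.norm_eq_abs _).symm
                _ ≤ ‖fderiv ℝ (fun y => innerNormal Φ y i) x‖ * ‖τ‖ :=
                    ContinuousLinearMap.le_opNorm _ τ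
                _ ≤ ‖fderiv ℝ (fun y => innerNormal Φ y i) x‖ * 1 :=
                    mul_le_mul_of_nonneg_left hτn (norm_nonneg _)
                _ = _ := mul_one _
            exact mul_le_mul e1 e2 (abs_nonneg _) hGbnn
        _ = Gb * ∑ i, ‖fderiv ℝ (fun y => innerNormal Φ y i) x‖ := by
            rw [Finset.mul_sum]
        _ ≤ Gb * KN := mul_le_mul_of_nonneg_left (hKN x hx) hGbnn
    rw [hkey]
    calc |fderiv ℝ φ x τ - ∑ i, Gi i x * (fderiv ℝ (fun y => innerNormal Φ y i) x τ)|
        ≤ |fderiv ℝ φ x τ| + |∑ i, Gi i x * (fderiv ℝ (fun y => innerNormal Φ y i) x τ)| :=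
          abs_sub _ _
      _ ≤ Kφ + Gb * KN := add_le_add hb1 hb2
  -- ####################  extend to t = 0 by continuity  ####################
  intro x hx t ht τ hτ1 hτt
  rcases eq_or_lt_of_le ht.1 with h0 | h0
  · set F : ℝ → ℝ := fun s => dotp ((hessM (fun y => u y s) x).mulVec τ) (innerNormal Φ x)
      with hFdef
    have hFc : Continuous F := by
      unfold F
      unfold dotp
      apply continuous_finset_sum
      intro i _
      apply Continuous.mul _ continuous_const
      unfold Matrix.mulVec dotProduct
      apply continuous_finset_sum
      intro j _
      exact (hess_cont_in_t husm x i j).mul continuous_const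
    have hne : (𝓝[Ioc (0:ℝ) T] (0:ℝ)).NeBot := by
      apply mem_closure_iff_nhdsWithin_neBot.1
      rw [closure_Ioc (ne_of_lt hT)]
      exact ⟨le_refl 0, le_of_lt hT⟩
    have hlim : Filter.Tendsto (fun s => |F s|) (𝓝[Ioc (0:ℝ) T] 0) (𝓝 |F 0|) :=
      ((hFc.abs.tendsto 0).mono_left nhdsWithin_le_nhds)
    have hbd : ∀ᶠ s in 𝓝[Ioc (0:ℝ) T] (0:ℝ), |F s| ≤ Kφ + Gb * KN :=
      eventually_nhdsWithin_of_forall (fun s hs => key s hs x hx τ hτ1 hτt)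
    have := le_of_tendsto hlim hbd
    rw [← h0]
    exact this
  · exact key t ⟨h0, ht.2⟩ x hx τ hτ1 hτt
end
end

section
/- For every constant K > 0 there is no entire strictly convex function u ∈ C^∞(ℝⁿ) satisfying det D²u(x) = K · (1 + |∇u(x)|²)^{(n+2)/2} for all x ∈ ℝⁿ; i.e., there exists no entire strictly convex graph of constant Gauß curvature K > 0. -/
open Set Filter Topology MeasureTheory

noncomputable section

namespace NE
open Matrix
variable {n : ℕ}

lemma dotp_nonneg (a : Fin n → ℝ) : 0 ≤ dotp a a :=
  Finset.sum_nonneg fun i _ => mul_self_nonneg _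

lemma one_add_dotp_pos (a : Fin n → ℝ) : 0 < 1 + dotp a a := by
  have := dotp_nonneg a; linarith

def cc (p : Fin n → ℝ) : ℝ := (1 + dotp p p) ^ (-(1:ℝ)/2)

def gmap (p : Fin n → ℝ) : Fin n → ℝ := cc p • p

lemma cc_pos (p : Fin n → ℝ) : 0 < cc p := Real.rpow_pos_of_pos (one_add_dotp_pos p) _

lemma dotp_smul_self (c : ℝ) (a : Fin n → ℝ) : dotp (c • a) (c • a) = c ^ 2 * dotp a a := by
  unfold dotp
  rw [Finset.mul_sum]
  exact Finset.sum_congr rfl fun i _ => by simp [Pi.smul_apply, smul_eq_mul]; ring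

lemma sq_cc (p : Fin n → ℝ) : cc p ^ 2 = (1 + dotp p p)⁻¹ := by
  unfold cc
  rw [← Real.rpow_natCast ((1 + dotp p p) ^ (-(1:ℝ)/2)) 2, ← Real.rpow_mul (one_add_dotp_pos p).le]
  norm_num
  exact Real.rpow_neg_one _

lemma gmap_inj : Function.Injective (gmap (n := n)) := by
  intro a b h
  have ha := one_add_dotp_pos a
  have hb := one_add_dotp_pos b
  have h2 : dotp (gmap a) (gmap a) = dotp (gmap b) (gmap b) := by rw [h]
  rw [gmap, gmap, dotp_smul_self, dotp_smul_self, sq_cc, sq_cc] at h2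
  have hs : dotp a a = dotp b b := by
    field_simp at h2
    nlinarith [h2]
  have hc : cc a = cc b := by rw [cc, cc, hs]
  have h3 : cc a • a = cc a • b := by
    have := h; rw [gmap, gmap, ← hc] at this; exact this
  exact smul_right_injective _ (ne_of_gt (cc_pos a)) h3

lemma gmap_norm_le (p : Fin n → ℝ) : ‖gmap p‖ ≤ 1 := by
  rw [pi_norm_le_iff_of_nonneg (by norm_num)]
  intro i
  have h1 : p i ^ 2 ≤ dotp p p := by
    have : p i * p i ≤ ∑ j, p j * p j :=
      Finset.single_le_sum (fun j _ => mul_self_nonneg (p j)) (Finset.mem_univ i)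
    simpa [dotp, sq] using this
  have hs := one_add_dotp_pos p
  have h2 : (gmap p i) ^ 2 ≤ 1 := by
    have : gmap p i = cc p * p i := rfl
    rw [this, mul_pow, sq_cc]
    rw [inv_mul_le_one₀ hs]
    linarith
  rw [Real.norm_eq_abs, abs_le]
  constructor <;> nlinarith [h2]

/-- derivative of `q ↦ dotp q q` at `p`. -/
def qd (p : Fin n → ℝ) : (Fin n → ℝ) →L[ℝ] ℝ :=
  ∑ i, (p i • ContinuousLinearMap.proj i + p i • ContinuousLinearMap.proj i)

lemma hasFDerivAt_dotp_self (p : Fin n → ℝ) :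
    HasFDerivAt (fun q : Fin n → ℝ => dotp q q) (qd p) p := by
  have h : ∀ i ∈ Finset.univ, HasFDerivAt (fun q : Fin n → ℝ => q i * q i)
      ((p i • ContinuousLinearMap.proj i + p i • ContinuousLinearMap.proj i :
        (Fin n → ℝ) →L[ℝ] ℝ)) p := by
    intro i _
    have hi := (ContinuousLinearMap.proj (R := ℝ) (φ := fun _ : Fin n => ℝ) i).hasFDerivAt (x := p)
    exact hi.mul hi
  exact HasFDerivAt.fun_sum h

lemma qd_apply (p v : Fin n → ℝ) : qd p v = 2 * dotp p v := by
  simp [qd, dotp, ContinuousLinearMap.sum_apply, Finset.mul_sum]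
  exact Finset.sum_congr rfl fun i _ => by ring

def cder (p : Fin n → ℝ) : (Fin n → ℝ) →L[ℝ] ℝ :=
  ((-(1:ℝ)/2) * (1 + dotp p p) ^ ((-(1:ℝ)/2) - 1)) • qd p

lemma hasFDerivAt_cc (p : Fin n → ℝ) : HasFDerivAt cc (cder p) p := by
  have h1 : HasFDerivAt (fun q : Fin n → ℝ => 1 + dotp q q) (qd p) p :=
    (hasFDerivAt_dotp_self p).const_add 1
  have h2 : HasDerivAt (fun t : ℝ => t ^ (-(1:ℝ)/2))
      ((-(1:ℝ)/2) * (1 + dotp p p) ^ ((-(1:ℝ)/2) - 1)) (1 + dotp p p) :=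
    Real.hasDerivAt_rpow_const (Or.inl (one_add_dotp_pos p).ne')
  exact h2.comp_hasFDerivAt p h1

def Dg (p : Fin n → ℝ) : (Fin n → ℝ) →L[ℝ] (Fin n → ℝ) :=
  cc p • ContinuousLinearMap.id ℝ (Fin n → ℝ) + (cder p).smulRight p

lemma hasFDerivAt_gmap (p : Fin n → ℝ) : HasFDerivAt gmap (Dg p) p :=
  (hasFDerivAt_cc p).smul (hasFDerivAt_id p)

lemma toMatrix'_Dg (p : Fin n → ℝ) :
    LinearMap.toMatrix' ((Dg p : (Fin n → ℝ) →L[ℝ] (Fin n → ℝ)) :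
      (Fin n → ℝ) →ₗ[ℝ] (Fin n → ℝ)) =
    cc p • (1 + Matrix.replicateCol Unit ((-(1 + dotp p p)⁻¹) • p) * Matrix.replicateRow Unit p) := by
  have hs := one_add_dotp_pos p
  ext i j
  rw [LinearMap.toMatrix'_apply]
  have hsing : (fun j' => if j' = j then (1:ℝ) else 0) = Pi.single j 1 := by
    ext j'; simp [Pi.single_apply]
  have lhs : (Dg p) (Pi.single j 1) i
      = cc p * (Pi.single j 1 : Fin n → ℝ) i + (cder p (Pi.single j 1)) * p i := by
    simp [Dg, ContinuousLinearMap.smulRight_apply, Pi.smul_apply, smul_eq_mul]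
  have hqd : qd p (Pi.single j 1) = 2 * p j := by
    rw [qd_apply]; simp [dotp, Pi.single_apply, Finset.mul_sum]
  have hcder : cder p (Pi.single j 1) = -(1 + dotp p p)⁻¹ * cc p * p j := by
    simp only [cder, ContinuousLinearMap.smul_apply, hqd, smul_eq_mul]
    rw [Real.rpow_sub hs, Real.rpow_one, cc]
    field_simp
  show (Dg p) (Pi.single j 1) i = _
  rw [lhs, hcder]
  simp only [Matrix.smul_apply, Matrix.add_apply, Matrix.one_apply, Matrix.mul_apply,
    Matrix.replicateCol_apply, Matrix.replicateRow_apply, Finset.univ_unique, Finset.sum_singleton,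
    Pi.smul_apply, smul_eq_mul, Pi.single_apply]
  by_cases hij : i = j <;> simp [hij] <;> ring

lemma det_Dg (p : Fin n → ℝ) :
    (Dg p).det = (1 + dotp p p) ^ (-((n:ℝ) + 2)/2) := by
  have hs := one_add_dotp_pos p
  rw [ContinuousLinearMap.det, ← LinearMap.det_toMatrix', toMatrix'_Dg, Matrix.det_smul,
    Matrix.det_one_add_replicateCol_mul_replicateRow]
  have hdv : p ⬝ᵥ ((-(1 + dotp p p)⁻¹) • p) = -(1 + dotp p p)⁻¹ * dotp p p := by
    simp [dotProduct, dotp, Finset.mul_sum]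
    exact Finset.sum_congr rfl fun i _ => by ring
  rw [hdv]
  have h1 : (1 : ℝ) + -(1 + dotp p p)⁻¹ * dotp p p = (1 + dotp p p)⁻¹ := by
    field_simp
    ring
  rw [h1]
  have h2 : cc p ^ Fintype.card (Fin n) = (1 + dotp p p) ^ (-(n:ℝ)/2) := by
    rw [Fintype.card_fin, cc, ← Real.rpow_natCast ((1 + dotp p p) ^ (-(1:ℝ)/2)) n,
      ← Real.rpow_mul hs.le]
    ring_nf
  rw [h2, ← Real.rpow_neg_one (1 + dotp p p), ← Real.rpow_add hs]
  ring_nf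

section Grad
variable {u : (Fin n → ℝ) → ℝ}

lemma diff_comp (hu : ContDiff ℝ (⊤ : ℕ∞) u) (i : Fin n) :
    ContDiff ℝ (⊤ : ℕ∞) (fun y => fderiv ℝ u y (Pi.single i 1)) :=
  (ContinuousLinearMap.apply ℝ ℝ (Pi.single i 1 : Fin n → ℝ)).contDiff.comp
    (hu.fderiv_right (by simp))

lemma contDiff_gradv (hu : ContDiff ℝ (⊤ : ℕ∞) u) : ContDiff ℝ (⊤ : ℕ∞) (gradv u) :=
  contDiff_pi.2 fun i => diff_comp hu i

lemma hasFDerivAt_gradv (hu : ContDiff ℝ (⊤ : ℕ∞) u) (x : Fin n → ℝ) :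
    HasFDerivAt (gradv u) (fderiv ℝ (gradv u) x) x :=
  ((contDiff_gradv hu).differentiable (by simp) x).hasFDerivAt

lemma fderiv_gradv_apply (hu : ContDiff ℝ (⊤ : ℕ∞) u) (x v : Fin n → ℝ) (i : Fin n) :
    fderiv ℝ (gradv u) x v i
      = fderiv ℝ (fun y => fderiv ℝ u y (Pi.single i 1)) x v := by
  have h : ∀ j : Fin n, DifferentiableAt ℝ (fun y => fderiv ℝ u y (Pi.single j 1)) x :=
    fun j => ((diff_comp hu j).differentiable (by simp)).differentiableAt
  rw [show gradv u = (fun x i => fderiv ℝ u x (Pi.single i 1)) from rfl, fderiv_pi h]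
  rfl

lemma det_fderiv_gradv (hu : ContDiff ℝ (⊤ : ℕ∞) u) (x : Fin n → ℝ) :
    (fderiv ℝ (gradv u) x).det = (hessM u x).det := by
  rw [ContinuousLinearMap.det, ← LinearMap.det_toMatrix']
  have hM : LinearMap.toMatrix' ((fderiv ℝ (gradv u) x : (Fin n → ℝ) →L[ℝ] (Fin n → ℝ)) :
      (Fin n → ℝ) →ₗ[ℝ] (Fin n → ℝ)) = (hessM u x)ᵀ := by
    ext i j
    rw [LinearMap.toMatrix'_apply]
    have hsing : (fun j' => if j' = j then (1:ℝ) else 0) = Pi.single j 1 := by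
      ext j'; simp [Pi.single_apply]
    show fderiv ℝ (gradv u) x (Pi.single j 1) i = _
    rw [fderiv_gradv_apply hu]
    rfl
  rw [hM, Matrix.det_transpose]

def dotCLM (v : Fin n → ℝ) : (Fin n → ℝ) →L[ℝ] ℝ :=
  ∑ i, v i • ContinuousLinearMap.proj i

lemma dotCLM_apply (v w : Fin n → ℝ) : dotCLM v w = dotp w v := by
  simp [dotCLM, dotp, ContinuousLinearMap.sum_apply]
  exact Finset.sum_congr rfl fun i _ => mul_comm _ _

lemma single_decomp (v : Fin n → ℝ) : v = ∑ j, (v j) • (Pi.single j 1 : Fin n → ℝ) := by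
  funext k
  simp [Finset.sum_apply, Pi.single_apply]

lemma fderiv_comp_single (u : (Fin n → ℝ) → ℝ) (y v : Fin n → ℝ) (i : Fin n) :
    fderiv ℝ (fun z => fderiv ℝ u z (Pi.single i 1)) y v = ∑ j, v j * hessM u y j i := by
  set L := fderiv ℝ (fun z => fderiv ℝ u z (Pi.single i 1)) y with hL
  calc L v = L (∑ j, (v j) • (Pi.single j 1 : Fin n → ℝ)) := by rw [← single_decomp]
    _ = ∑ j, v j * L (Pi.single j 1) := by
        rw [map_sum]
        exact Finset.sum_congr rfl fun j _ => by rw [_root_.map_smul]; rfl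
    _ = ∑ j, v j * hessM u y j i := rfl

lemma gradv_inj (hu : ContDiff ℝ (⊤ : ℕ∞) u) (hpos : ∀ x, (hessM u x).PosDef) :
    Function.Injective (gradv u) := by
  intro a b hab
  by_contra hne
  set v := b - a with hv
  have hv0 : v ≠ 0 := sub_ne_zero.2 (Ne.symm hne)
  set φ : ℝ → ℝ := fun t => dotCLM v (gradv u (a + t • v)) with hφ
  have hder : ∀ t : ℝ, HasDerivAt φ
      (((dotCLM v).comp (fderiv ℝ (gradv u) (a + t • v))) v) t := by
    intro t
    have hγ : HasDerivAt (fun t : ℝ => a + t • v) v t := by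
      simpa using ((hasDerivAt_id t).smul_const v).const_add a
    have hψ : HasFDerivAt (fun y => dotCLM v (gradv u y))
        ((dotCLM v).comp (fderiv ℝ (gradv u) (a + t • v))) (a + t • v) :=
      ((dotCLM v).hasFDerivAt).comp _ (hasFDerivAt_gradv hu _)
    have := hψ.comp_hasDerivAt t hγ; exact this
  have hposval : ∀ t : ℝ,
      0 < ((dotCLM v).comp (fderiv ℝ (gradv u) (a + t • v))) v := by
    intro t
    set y := a + t • v with hy
    have hp := (hpos y).dotProduct_mulVec_pos hv0
    have hstar : (star v : Fin n → ℝ) = v := by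
      funext k; simp
    rw [hstar] at hp
    have hval : ((dotCLM v).comp (fderiv ℝ (gradv u) y)) v
        = dotProduct v ((hessM u y) *ᵥ v) := by
      rw [ContinuousLinearMap.comp_apply, dotCLM_apply]
      have hcomp : ∀ i, fderiv ℝ (gradv u) y v i = ∑ j, v j * hessM u y j i := by
        intro i
        rw [fderiv_gradv_apply hu, fderiv_comp_single]
      simp only [dotp, Matrix.mulVec, dotProduct, hcomp, Finset.sum_mul,
        Finset.mul_sum]
      rw [Finset.sum_comm]
      exact Finset.sum_congr rfl fun i _ => Finset.sum_congr rfl fun j _ => by ring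
    rw [hval]
    exact hp
  have hmono : StrictMono φ :=
    strictMono_of_deriv_pos fun t => by rw [(hder t).deriv]; exact hposval t
  have h01 : φ 0 < φ 1 := hmono zero_lt_one
  have he0 : φ 0 = dotCLM v (gradv u a) := by simp [hφ]
  have he1 : φ 1 = dotCLM v (gradv u b) := by
    have hb : a + (1:ℝ) • v = b := by rw [one_smul, hv]; abel
    simp only [hφ]
    rw [hb]
  rw [he0, he1, hab] at h01
  exact lt_irrefl _ h01

end Grad

theorem main (n : ℕ) (hn : 2 ≤ n) (K : ℝ) (hK : 0 < K) :
    ¬ ∃ u : (Fin n → ℝ) → ℝ,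
      ContDiff ℝ (⊤ : ℕ∞) u ∧
      (∀ x, (hessM u x).PosDef) ∧
      (∀ x, (hessM u x).det =
        K * (1 + dotp (gradv u x) (gradv u x)) ^ (((n : ℝ) + 2) / 2)) := by
  rintro ⟨u, hu, hpos, heq⟩
  set F : (Fin n → ℝ) → (Fin n → ℝ) := fun x => gmap (gradv u x) with hF
  set F' : (Fin n → ℝ) → ((Fin n → ℝ) →L[ℝ] (Fin n → ℝ)) :=
    fun x => (Dg (gradv u x)).comp (fderiv ℝ (gradv u) x) with hF'def
  have hF' : ∀ x, HasFDerivAt F (F' x) x := fun x =>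
    (hasFDerivAt_gmap _).comp x (hasFDerivAt_gradv hu x)
  have hdet : ∀ x, (F' x).det = K := by
    intro x
    have h1 : (F' x).det = (Dg (gradv u x)).det * (fderiv ℝ (gradv u) x).det := by
      show LinearMap.det _ = _
      rw [hF'def]
      exact LinearMap.det_comp _ _
    rw [h1, det_fderiv_gradv hu, heq x, det_Dg]
    have hs := one_add_dotp_pos (gradv u x)
    set t := dotp (gradv u x) (gradv u x) with ht
    calc (1 + t) ^ (-((n:ℝ) + 2)/2) * (K * (1 + t) ^ (((n:ℝ) + 2)/2))
        = K * ((1 + t) ^ (-((n:ℝ) + 2)/2) * (1 + t) ^ (((n:ℝ) + 2)/2)) := by ring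
      _ = K * (1 + t) ^ ((-((n:ℝ) + 2)/2) + ((n:ℝ) + 2)/2) := by
          rw [← Real.rpow_add hs]
      _ = K := by
          rw [show (-((n:ℝ) + 2)/2 + ((n:ℝ) + 2)/2 : ℝ) = 0 by ring, Real.rpow_zero, mul_one]
  have hinj : Function.Injective F := fun a b h => gradv_inj hu hpos (gmap_inj h)
  set R : ℝ := 1/K + 1 with hR
  have hKinv : 0 < 1/K := by positivity
  have hR1 : 1 < R := by rw [hR]; linarith
  have hR0 : (0:ℝ) ≤ R := by linarith
  have hKRn : 1 < K * R ^ n := by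
    have h2 : R ≤ R ^ n := le_self_pow₀ hR1.le (by omega)
    have h3 : 1/K < R ^ n := by rw [hR] at h2 ⊢; linarith
    calc (1:ℝ) = K * (1/K) := by field_simp
      _ < K * R ^ n := by exact mul_lt_mul_of_pos_left h3 hK
  set s := Metric.closedBall (0 : Fin n → ℝ) R with hsdef
  have hsm : MeasurableSet s := measurableSet_closedBall
  have hchg := lintegral_abs_det_fderiv_eq_addHaar_image volume hsm
    (fun x _ => (hF' x).hasFDerivWithinAt) (hinj.injOn)
  have hleft : (∫⁻ x in s, ENNReal.ofReal |(F' x).det| ∂volume)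
      = ENNReal.ofReal K * volume s := by
    have hc : ∀ x, ENNReal.ofReal |(F' x).det| = ENNReal.ofReal K := by
      intro x; rw [hdet, abs_of_pos hK]
    simp only [hc]
    rw [MeasureTheory.setLIntegral_const]
  have himg : F '' s ⊆ Metric.closedBall (0 : Fin n → ℝ) 1 := by
    rintro _ ⟨x, _, rfl⟩
    rw [Metric.mem_closedBall, dist_zero_right]
    exact gmap_norm_le _
  have hfr : Module.finrank ℝ (Fin n → ℝ) = n := Module.finrank_fin_fun ℝ
  set B := volume (Metric.ball (0 : Fin n → ℝ) 1) with hB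
  have hco : volume s = ENNReal.ofReal (R ^ n) * B := by
    rw [hsdef, Measure.addHaar_closedBall _ _ hR0, hfr]
  have hc1 : volume (Metric.closedBall (0 : Fin n → ℝ) 1) = B := by
    rw [Measure.addHaar_closedBall _ _ zero_le_one, hfr, one_pow, ENNReal.ofReal_one, one_mul]
  have hB0 : B ≠ 0 := (Metric.measure_ball_pos volume _ zero_lt_one).ne'
  have hBt : B ≠ ⊤ := measure_ball_lt_top.ne
  have hfinal : ENNReal.ofReal (K * R ^ n) * B ≤ 1 * B := by
    rw [one_mul, ENNReal.ofReal_mul hK.le, mul_assoc, ← hco, hleft.symm.trans hchg, ← hc1]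
    exact measure_mono himg
  rw [ENNReal.mul_le_mul_iff_left hB0 hBt] at hfinal
  have : K * R ^ n ≤ 1 := ENNReal.ofReal_le_one.mp hfinal
  linarith

end NE

/-- There is no entire strictly convex graph of constant Gauß curvature `K > 0`. -/
theorem no_entire_graph_constant_gauss_curvature
    (n : ℕ) (hn : 2 ≤ n) (K : ℝ) (hK : 0 < K) :
    ¬ ∃ u : (Fin n → ℝ) → ℝ,
      ContDiff ℝ (⊤ : ℕ∞) u ∧
      (∀ x, (hessM u x).PosDef) ∧
      (∀ x, (hessM u x).det =
        K * (1 + dotp (gradv u x) (gradv u x)) ^ (((n : ℝ) + 2) / 2)) := by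
  exact NE.main n hn K hK
end
end

section
/- Let g ∈ C^∞(ℝⁿ) be positive and rotationally symmetric. Then there exists an entire strictly convex function u ∈ C^∞(ℝⁿ) with |∇u(x)| < 1 for all x and satisfying det D²u(x) = g(x) · (1 − |∇u(x)|²)^{(n+2)/2} for all x ∈ ℝⁿ. -/
open Set Filter Topology MeasureTheory

noncomputable section

open intervalIntegral Matrix

section AuxMinkowski


/-- parametric integral `t ↦ ∫_0^1 c(u) f(t u) du`. -/
def pInt (c f : ℝ → ℝ) : ℝ → ℝ := fun t => ∫ u in (0:ℝ)..1, c u * f (t * u)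

lemma pInt_hasDerivAt (c f : ℝ → ℝ) (hc : Continuous c) (hf : ContDiff ℝ (⊤ : ℕ∞) f)
    (t₀ : ℝ) :
    HasDerivAt (pInt c f) (pInt (fun u => c u * u) (deriv f) t₀) t₀ := by
  have hdf : Continuous (deriv f) := hf.continuous_deriv (by exact_mod_cast le_top)
  obtain ⟨M, hM⟩ : ∃ M, ∀ y ∈ Icc (-(|t₀|+1)) (|t₀|+1), ‖deriv f y‖ ≤ M :=
    (isCompact_Icc).exists_bound_of_continuousOn hdf.continuousOn
  set C := max M 0 with hC
  have hMC : ∀ y ∈ Icc (-(|t₀|+1)) (|t₀|+1), ‖deriv f y‖ ≤ C :=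
    fun y hy => (hM y hy).trans (le_max_left _ _)
  have key := intervalIntegral.hasDerivAt_integral_of_dominated_loc_of_deriv_le
    (F := fun x u => c u * f (x * u)) (F' := fun x u => c u * (deriv f (x * u) * u))
    (x₀ := t₀) (a := 0) (b := 1) (bound := fun u => ‖c u‖ * C) (μ := volume)
    (Metric.ball_mem_nhds t₀ one_pos)
    (Eventually.of_forall (fun x =>
      (hc.mul (hf.continuous.comp (continuous_const.mul continuous_id))).aestronglyMeasurable))
    ((hc.mul (hf.continuous.comp (continuous_const.mul continuous_id))).intervalIntegrable 0 1)
    ((hc.mul ((hdf.comp (continuous_const.mul continuous_id)).mul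
      continuous_id)).aestronglyMeasurable)
    ?_ ((hc.norm.mul continuous_const).intervalIntegrable 0 1) ?_
  · have h2 := key.2
    have heq : (∫ u in (0:ℝ)..1, c u * (deriv f (t₀ * u) * u)) =
        pInt (fun u => c u * u) (deriv f) t₀ := by
      unfold pInt
      apply intervalIntegral.integral_congr
      intro u _
      ring
    rwa [heq] at h2
  · apply Eventually.of_forall
    intro u hu x hx
    have hu' : u ∈ Set.Ioc (0:ℝ) 1 := by
      simpa [Set.uIoc_of_le (zero_le_one)] using hu
    have hxu : x * u ∈ Icc (-(|t₀|+1)) (|t₀|+1) := by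
      have hx' : |x - t₀| < 1 := by simpa [Real.dist_eq] using Metric.mem_ball.1 hx
      have h1 : |x * u| ≤ |x| := by
        rw [abs_mul]
        nlinarith [abs_nonneg x, abs_nonneg u, abs_of_pos hu'.1, hu'.2]
      have h2 : |x| ≤ |t₀| + 1 := by
        have := abs_sub_abs_le_abs_sub x t₀
        linarith
      have := abs_le.1 (h1.trans h2)
      exact ⟨this.1, this.2⟩
    calc ‖c u * (deriv f (x * u) * u)‖ = ‖c u‖ * (‖deriv f (x * u)‖ * ‖u‖) := by
          rw [norm_mul, norm_mul]
      _ ≤ ‖c u‖ * (C * 1) := by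
          apply mul_le_mul_of_nonneg_left _ (norm_nonneg _)
          apply mul_le_mul (hMC _ hxu) _ (norm_nonneg _) (le_max_right _ _)
          rw [Real.norm_eq_abs, abs_of_pos hu'.1]
          exact hu'.2
      _ = ‖c u‖ * C := by ring
  · apply Eventually.of_forall
    intro u _ x _
    have h1 : HasDerivAt (fun x : ℝ => x * u) u x := by
      simpa using (hasDerivAt_id x).mul_const u
    have h2 : HasDerivAt f (deriv f (x * u)) (x * u) :=
      (hf.differentiable (by simp)).differentiableAt.hasDerivAt
    exact ((h2.comp x h1).const_mul (c u))

lemma pInt_contDiff (m : ℕ) : ∀ (c f : ℝ → ℝ), Continuous c → ContDiff ℝ (⊤ : ℕ∞) f →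
    ContDiff ℝ (m : ℕ∞) (pInt c f) := by
  induction m with
  | zero =>
    intro c f hc hf
    have hd : Differentiable ℝ (pInt c f) := by
      intro t
      exact (pInt_hasDerivAt c f hc hf t).differentiableAt
    have hcont : Continuous (pInt c f) := hd.continuous
    simpa using (contDiff_zero (𝕜 := ℝ)).mpr hcont
  | succ m ih =>
    intro c f hc hf
    have hdiff : Differentiable ℝ (pInt c f) := by
      intro t
      exact (pInt_hasDerivAt c f hc hf t).differentiableAt
    have hderiv : deriv (pInt c f) = pInt (fun u => c u * u) (deriv f) := by
      funext t
      exact (pInt_hasDerivAt c f hc hf t).deriv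
    have : ContDiff ℝ (m : ℕ∞) (deriv (pInt c f)) := by
      rw [hderiv]
      exact ih (fun u => c u * u) (deriv f) (hc.mul continuous_id)
        ((contDiff_infty_iff_deriv.mp (by exact_mod_cast hf)).2 |> fun h => by exact_mod_cast h)
    have goal : ContDiff ℝ ((m : WithTop ℕ∞) + 1) (pInt c f) := by
      apply contDiff_succ_iff_deriv.mpr
      refine ⟨hdiff, ?_, by exact_mod_cast this⟩
      intro h
      exact absurd h (by simp)
    exact_mod_cast goal


lemma contDiff_top_deriv {f : ℝ → ℝ} (hf : ContDiff ℝ (⊤ : ℕ∞) f) :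
    ContDiff ℝ (⊤ : ℕ∞) (deriv f) := by
  have : ContDiff ℝ ((⊤ : ℕ∞) : WithTop ℕ∞) f := by exact_mod_cast hf
  have := (contDiff_infty_iff_deriv.mp this).2
  exact_mod_cast this

lemma pInt_contDiff_top {c f : ℝ → ℝ} (hc : Continuous c) (hf : ContDiff ℝ (⊤ : ℕ∞) f) :
    ContDiff ℝ (⊤ : ℕ∞) (pInt c f) := by
  have : ContDiff ℝ ((⊤ : ℕ∞) : WithTop ℕ∞) (pInt c f) := by
    rw [contDiff_infty]
    intro m
    exact_mod_cast pInt_contDiff m c f hc hf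
  exact_mod_cast this

lemma deriv_odd_of_even {θ : ℝ → ℝ} (hθ : ContDiff ℝ (⊤ : ℕ∞) θ) (he : ∀ r, θ (-r) = θ r)
    (r : ℝ) : deriv θ (-r) = - deriv θ r := by
  have hd : Differentiable ℝ θ := hθ.differentiable (by simp)
  have h1 : HasDerivAt (fun s : ℝ => θ (-s)) (deriv θ (-r) * (-1)) r :=
    (hd (-r)).hasDerivAt.comp r (hasDerivAt_neg' r)
  have h2 : (fun s : ℝ => θ (-s)) = θ := funext he
  rw [h2] at h1
  have h3 := h1.unique (hd r).hasDerivAt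
  linarith

lemma deriv_even_of_odd {θ : ℝ → ℝ} (hθ : ContDiff ℝ (⊤ : ℕ∞) θ) (ho : ∀ r, θ (-r) = -θ r)
    (r : ℝ) : deriv θ (-r) = deriv θ r := by
  have hd : Differentiable ℝ θ := hθ.differentiable (by simp)
  have h1 : HasDerivAt (fun s : ℝ => θ (-s)) (deriv θ (-r) * (-1)) r :=
    (hd (-r)).hasDerivAt.comp r (hasDerivAt_neg' r)
  have h2 : (fun s : ℝ => θ (-s)) = fun s => -θ s := funext ho
  rw [h2] at h1
  have h3 := h1.unique ((hd r).hasDerivAt.neg)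
  linarith

/-- For an even smooth function, the derivative factors as `r * σ r` with `σ` even smooth. -/
lemma odd_factor {θ : ℝ → ℝ} (hθ : ContDiff ℝ (⊤ : ℕ∞) θ) (he : ∀ r, θ (-r) = θ r) :
    ∃ σ : ℝ → ℝ, ContDiff ℝ (⊤ : ℕ∞) σ ∧ (∀ r, σ (-r) = σ r) ∧ ∀ r, deriv θ r = r * σ r := by
  set f := deriv θ with hfdef
  have hf : ContDiff ℝ (⊤ : ℕ∞) f := contDiff_top_deriv hθ
  have hfodd : ∀ r, f (-r) = -f r := fun r => deriv_odd_of_even hθ he r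
  have hf0 : f 0 = 0 := by have := hfodd 0; simp at this; linarith
  have hdf : Continuous (deriv f) := (contDiff_top_deriv hf).continuous
  refine ⟨pInt (fun _ => 1) (deriv f), pInt_contDiff_top continuous_const (contDiff_top_deriv hf), ?_, ?_⟩
  · intro r
    unfold pInt
    apply intervalIntegral.integral_congr
    intro u _
    simp only [one_mul]
    have := deriv_even_of_odd hf hfodd (r * u)
    rw [← this]
    ring_nf
  · intro r
    have hsub : (∫ u in (0:ℝ)..1, r • (deriv f (r * u))) = ∫ x in (0:ℝ)..r, deriv f x := by
      have := intervalIntegral.integral_comp_smul_deriv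
        (f := fun u : ℝ => r * u) (f' := fun _ => r) (g := deriv f) (a := 0) (b := 1)
        (fun x _ => by simpa using (hasDerivAt_id x).const_mul r)
        continuousOn_const hdf
      simpa using this
    have hftc : (∫ x in (0:ℝ)..r, deriv f x) = f r - f 0 :=
      integral_deriv_eq_sub (fun x _ => (hf.differentiable (by simp) x))
        (hdf.intervalIntegrable 0 r)
    have : r * pInt (fun _ => 1) (deriv f) r = f r := by
      unfold pInt
      rw [← intervalIntegral.integral_const_mul]
      calc (∫ u in (0:ℝ)..1, r * (1 * deriv f (r * u)))
          = ∫ u in (0:ℝ)..1, r • (deriv f (r * u)) := by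
            apply intervalIntegral.integral_congr; intro u _; simp
        _ = f r - f 0 := by rw [hsub, hftc]
        _ = f r := by rw [hf0, sub_zero]
    rw [← this]


lemma cont_primitive_hasDerivAt {f : ℝ → ℝ} (hf : Continuous f) (a r : ℝ) :
    HasDerivAt (fun t => ∫ s in a..t, f s) (f r) r :=
  (intervalIntegral.integral_hasStrictDerivAt_right (hf.intervalIntegrable a r)
    (hf.stronglyMeasurableAtFilter _ _) hf.continuousAt).hasDerivAt

lemma primitive_contDiff {f : ℝ → ℝ} (hf : ContDiff ℝ (⊤ : ℕ∞) f) (a : ℝ) :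
    ContDiff ℝ (⊤ : ℕ∞) (fun t => ∫ s in a..t, f s) := by
  have hdiff : Differentiable ℝ (fun t => ∫ s in a..t, f s) := by
    intro r
    exact (cont_primitive_hasDerivAt hf.continuous a r).differentiableAt
  have hderiv : deriv (fun t => ∫ s in a..t, f s) = f :=
    funext fun r => (cont_primitive_hasDerivAt hf.continuous a r).deriv
  have : ContDiff ℝ ((⊤ : ℕ∞) : WithTop ℕ∞) (fun t => ∫ s in a..t, f s) := by
    apply contDiff_infty_iff_deriv.mpr
    exact ⟨hdiff, by rw [hderiv]; exact_mod_cast hf⟩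
  exact_mod_cast this

lemma one_div_sq_rpow (S : ℝ) (hS : 0 < S) (n : ℕ) :
    (1 / S ^ 2) ^ (((n:ℝ)+2)/2) = (S ^ (n+2))⁻¹ := by
  have e1 : 1 / S ^ 2 = S ^ (-2 : ℝ) := by
    rw [Real.rpow_neg hS.le]
    rw [show ((2:ℝ)) = ((2:ℕ):ℝ) by norm_num, Real.rpow_natCast, one_div]
  rw [e1, ← Real.rpow_natCast S (n + 2), ← Real.rpow_mul hS.le, ← Real.rpow_neg hS.le]
  congr 1
  push_cast
  ring

/-- The one-dimensional radial construction. -/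
lemma oneDim (n : ℕ) (hn : 2 ≤ n) (G : ℝ → ℝ) (hG : ContDiff ℝ (⊤ : ℕ∞) G)
    (hGpos : ∀ r, 0 < G r) (hGeven : ∀ r, G (-r) = G r) :
    ∃ φ ρ ρ₁ : ℝ → ℝ,
      ContDiff ℝ (⊤ : ℕ∞) φ ∧ (∀ r, φ (-r) = φ r) ∧
      ContDiff ℝ (⊤ : ℕ∞) ρ ∧ (∀ r, ρ (-r) = ρ r) ∧ (∀ r, 0 < ρ r) ∧
      (∀ r, deriv φ r = r * ρ r) ∧ (∀ r, deriv ρ r = r * ρ₁ r) ∧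
      (∀ r, 0 < ρ r + r ^ 2 * ρ₁ r) ∧
      (∀ r, (r * ρ r) ^ 2 < 1) ∧
      (∀ r, ρ r ^ (n - 1) * (ρ r + r ^ 2 * ρ₁ r) =
        G r * (1 - (r * ρ r) ^ 2) ^ (((n : ℝ) + 2) / 2)) := by
  have hnR : (0:ℝ) < n := by positivity
  -- the averaged density
  set c : ℝ → ℝ := fun u => (n : ℝ) * u ^ (n - 1) with hc
  have hccont : Continuous c := continuous_const.mul (continuous_pow _)
  set abar : ℝ → ℝ := pInt c G with habar
  have habarsmooth : ContDiff ℝ (⊤ : ℕ∞) abar := pInt_contDiff_top hccont hG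
  have habarpos : ∀ r, 0 < abar r := by
    intro r
    apply intervalIntegral.intervalIntegral_pos_of_pos_on
    · exact ((hccont.mul (hG.continuous.comp (continuous_const.mul continuous_id))).intervalIntegrable 0 1)
    · intro u hu
      have : (0:ℝ) < u ^ (n-1) := pow_pos hu.1 _
      have := hGpos (r * u)
      positivity
    · norm_num
  have habareven : ∀ r, abar (-r) = abar r := by
    intro r
    show pInt c G (-r) = pInt c G r
    unfold pInt
    apply intervalIntegral.integral_congr
    intro u _
    show c u * G (-r * u) = c u * G (r * u)
    rw [show -r * u = -(r * u) by ring, hGeven]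
  -- b = abar ^ (1/n)
  set b : ℝ → ℝ := fun r => abar r ^ ((n : ℝ)⁻¹) with hb
  have hbpos : ∀ r, 0 < b r := fun r => Real.rpow_pos_of_pos (habarpos r) _
  have hbsmooth : ContDiff ℝ (⊤ : ℕ∞) b := by
    rw [contDiff_iff_contDiffAt]
    intro r
    exact (habarsmooth.contDiffAt).rpow_const_of_ne (ne_of_gt (habarpos r))
  have hbeven : ∀ r, b (-r) = b r := fun r => by rw [hb]; simp only; rw [habareven]
  have hbpow : ∀ r, b r ^ n = abar r := by
    intro r
    rw [hb]
    simp only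
    rw [← Real.rpow_natCast (abar r ^ ((n:ℝ)⁻¹)) n, ← Real.rpow_mul (le_of_lt (habarpos r))]
    rw [inv_mul_cancel₀ (ne_of_gt hnR), Real.rpow_one]
  -- S = sqrt (1 + (r b)^2)
  set S : ℝ → ℝ := fun r => Real.sqrt (1 + (r * b r) ^ 2) with hS
  have hSpos : ∀ r, 0 < S r := fun r => Real.sqrt_pos.mpr (by positivity)
  have hSsq : ∀ r, S r ^ 2 = 1 + (r * b r) ^ 2 := fun r =>
    Real.sq_sqrt (by positivity)
  have hSsmooth : ContDiff ℝ (⊤ : ℕ∞) S := by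
    rw [contDiff_iff_contDiffAt]
    intro r
    exact ContDiffAt.sqrt
      ((contDiff_const.add ((contDiff_id.mul hbsmooth).pow 2)).contDiffAt)
      (by positivity)
  have hSeven : ∀ r, S (-r) = S r := by
    intro r
    rw [hS]; simp only
    rw [hbeven]
    ring_nf
  -- ρ = b / S
  set ρ : ℝ → ℝ := fun r => b r / S r with hρ
  have hρsmooth : ContDiff ℝ (⊤ : ℕ∞) ρ := hbsmooth.div hSsmooth (fun r => ne_of_gt (hSpos r))
  have hρpos : ∀ r, 0 < ρ r := fun r => div_pos (hbpos r) (hSpos r)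
  have hρeven : ∀ r, ρ (-r) = ρ r := fun r => by rw [hρ]; simp only; rw [hbeven, hSeven]
  -- w = r * b r
  set w : ℝ → ℝ := fun r => r * b r with hw
  have hwsmooth : ContDiff ℝ (⊤ : ℕ∞) w := contDiff_id.mul hbsmooth
  have hwdiff : Differentiable ℝ w := hwsmooth.differentiable (by simp)
  -- FTC primitive
  set Abar : ℝ → ℝ := fun r => ∫ s in (0:ℝ)..r, (n : ℝ) * s ^ (n - 1) * G s with hAbar
  have hInt : Continuous fun s : ℝ => (n : ℝ) * s ^ (n-1) * G s := (hccont.mul hG.continuous)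
  have hAbarDeriv : ∀ r, HasDerivAt Abar ((n : ℝ) * r ^ (n-1) * G r) r :=
    fun r => cont_primitive_hasDerivAt hInt 0 r
  -- substitution identity : w^n = Abar
  have hsub : ∀ r, w r ^ n = Abar r := by
    intro r
    have h1 : (∫ u in (0:ℝ)..1, r • ((n:ℝ) * (r*u) ^ (n-1) * G (r*u))) = Abar r := by
      have := intervalIntegral.integral_comp_smul_deriv
        (f := fun u : ℝ => r * u) (f' := fun _ => r)
        (g := fun s => (n:ℝ) * s ^ (n-1) * G s) (a := 0) (b := 1)
        (fun x _ => by simpa using (hasDerivAt_id x).const_mul r)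
        continuousOn_const hInt
      simpa using this
    have h2 : (∫ u in (0:ℝ)..1, r • ((n:ℝ) * (r*u) ^ (n-1) * G (r*u)))
        = r ^ n * abar r := by
      rw [habar]
      unfold pInt
      rw [← intervalIntegral.integral_const_mul]
      apply intervalIntegral.integral_congr
      intro u _
      simp only [smul_eq_mul, hc]
      rw [mul_pow]
      have hexp : r * ((n:ℝ) * (r ^ (n-1) * u ^ (n-1)) * G (r*u))
          = r ^ ((n-1)+1) * ((n:ℝ) * u ^ (n-1) * G (r*u)) := by ring
      rw [hexp, Nat.sub_add_cancel (by omega)]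
    rw [hw]
    simp only
    rw [mul_pow, ← h1, h2, hbpow]
  -- E1
  have hE1 : ∀ r, (n:ℝ) * w r ^ (n-1) * deriv w r = (n:ℝ) * r ^ (n-1) * G r := by
    intro r
    have hd1 : HasDerivAt (fun r => w r ^ n) ((n:ℝ) * w r ^ (n-1) * deriv w r) r := by
      have := ((hwdiff r).hasDerivAt).fun_pow n
      simpa using this
    have heq : (fun r => w r ^ n) = Abar := funext hsub
    rw [heq] at hd1
    exact hd1.unique (hAbarDeriv r)
  -- E2 by density
  have hwderivcont : Continuous (deriv w) := (contDiff_top_deriv hwsmooth).continuous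
  have hE2 : ∀ r, b r ^ (n-1) * deriv w r = G r := by
    have key : (fun r => b r ^ (n-1) * deriv w r) = G := by
      apply Continuous.ext_on (dense_compl_singleton (0:ℝ))
        ((hbsmooth.continuous.pow _).mul hwderivcont) hG.continuous
      intro r hr
      have hr0 : r ≠ 0 := hr
      have h1 := hE1 r
      have hwr : w r ^ (n-1) = r ^ (n-1) * b r ^ (n-1) := by
        rw [hw]; simp only [mul_pow]
      rw [hwr] at h1
      have hrn : (n:ℝ) * r ^ (n-1) ≠ 0 := by
        apply mul_ne_zero (ne_of_gt hnR) (pow_ne_zero _ hr0)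
      apply mul_left_cancel₀ hrn
      calc (n:ℝ) * r ^ (n-1) * (b r ^ (n-1) * deriv w r)
          = (n:ℝ) * (r ^ (n-1) * b r ^ (n-1)) * deriv w r := by ring
        _ = (n:ℝ) * r ^ (n-1) * G r := h1
        _ = (n:ℝ) * r ^ (n-1) * G r := rfl
    intro r
    exact congrFun key r
  have hwderivpos : ∀ r, 0 < deriv w r := by
    intro r
    have := hE2 r
    have hbp : 0 < b r ^ (n-1) := pow_pos (hbpos r) _
    nlinarith [hGpos r]
  -- ψ' = w' / S^3
  set ψ : ℝ → ℝ := fun r => r * ρ r with hψ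
  have hψw : ∀ r, ψ r = w r / S r := by
    intro r; rw [hψ, hρ, hw]; simp only; ring
  have hwrfl : ∀ r, w r = r * b r := fun _ => rfl
  have hSderiv : ∀ r, HasDerivAt S (w r * deriv w r / S r) r := by
    intro r
    have h1 : HasDerivAt (fun r => 1 + w r ^ 2) (2 * w r * deriv w r) r := by
      have := (((hwdiff r).hasDerivAt).pow 2).const_add 1
      simpa [mul_comm] using this
    have h2 := (Real.hasDerivAt_sqrt (x := 1 + w r ^ 2) (by positivity)).comp r h1
    have h3 : HasDerivAt S (1 / (2 * Real.sqrt (1 + w r ^ 2)) * (2 * w r * deriv w r)) r := h2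
    have hSr : Real.sqrt (1 + w r ^ 2) = S r := rfl
    convert h3 using 1
    rw [hSr]
    have hSne : S r ≠ 0 := ne_of_gt (hSpos r)
    field_simp
  have hψ' : ∀ r, deriv ψ r = deriv w r / S r ^ 3 := by
    intro r
    have h1 : HasDerivAt ψ ((deriv w r * S r - w r * (w r * deriv w r / S r)) / S r ^ 2) r := by
      have := ((hwdiff r).hasDerivAt).fun_div (hSderiv r) (ne_of_gt (hSpos r))
      have heq : (fun r => w r / S r) = ψ := by funext t; rw [hψw t]
      rw [heq] at this
      exact this
    rw [h1.deriv]
    have hSne : S r ≠ 0 := ne_of_gt (hSpos r)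
    have hsq : S r ^ 2 = 1 + w r ^ 2 := by rw [hSsq r, hwrfl]
    field_simp
    ring_nf
    linear_combination (deriv w r) * hsq
  -- ρ₁ from odd_factor
  obtain ⟨ρ₁, hρ₁smooth, hρ₁even, hρderiv⟩ := odd_factor hρsmooth hρeven
  have hρdiff : Differentiable ℝ ρ := hρsmooth.differentiable (by simp)
  have hψderiv2 : ∀ r, deriv ψ r = ρ r + r ^ 2 * ρ₁ r := by
    intro r
    have h1 : HasDerivAt ψ (1 * ρ r + r * deriv ρ r) r :=
      (hasDerivAt_id r).mul (hρdiff r).hasDerivAt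
    rw [h1.deriv, hρderiv r]
    ring
  have hψderivpos : ∀ r, 0 < ρ r + r ^ 2 * ρ₁ r := by
    intro r
    rw [← hψderiv2 r, hψ' r]
    exact div_pos (hwderivpos r) (pow_pos (hSpos r) 3)
  -- spacelike
  have hrρ : ∀ r, r * ρ r = w r / S r := fun r => hψw r
  have hspace : ∀ r, (r * ρ r) ^ 2 < 1 := by
    intro r
    rw [hrρ, div_pow, div_lt_one (by positivity)]
    have hsq : S r ^ 2 = 1 + w r ^ 2 := by rw [hSsq r, hwrfl]
    rw [hsq]
    nlinarith [sq_nonneg (w r)]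
  -- the main equation
  have hmain : ∀ r, ρ r ^ (n-1) * (ρ r + r ^ 2 * ρ₁ r) =
      G r * (1 - (r * ρ r) ^ 2) ^ (((n : ℝ) + 2) / 2) := by
    intro r
    have hSne : S r ≠ 0 := ne_of_gt (hSpos r)
    have hsq : S r ^ 2 = 1 + w r ^ 2 := by rw [hSsq r, hwrfl]
    have h1 : 1 - (r * ρ r) ^ 2 = 1 / S r ^ 2 := by
      rw [hrρ, div_pow]
      field_simp
      linarith [hsq]
    have h2 : (1 - (r * ρ r) ^ 2) ^ (((n : ℝ) + 2) / 2) = (S r ^ (n + 2))⁻¹ := by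
      rw [h1]
      exact one_div_sq_rpow (S r) (hSpos r) n
    rw [h2, ← hψderiv2 r, hψ' r]
    have hρr : ρ r = b r / S r := rfl
    have hpow : S r ^ (n - 1) * S r ^ 3 = S r ^ (n + 2) := by
      rw [← pow_add]
      congr 1
      omega
    rw [hρr, div_pow, div_mul_div_comm, hpow, hE2 r, div_eq_mul_inv]
  -- the profile function φ
  have hψsmooth : ContDiff ℝ (⊤ : ℕ∞) ψ := contDiff_id.mul hρsmooth
  set φ : ℝ → ℝ := fun r => ∫ s in (0:ℝ)..r, ψ s with hφ
  have hφsmooth : ContDiff ℝ (⊤ : ℕ∞) φ := primitive_contDiff hψsmooth 0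
  have hφderiv : ∀ r, deriv φ r = r * ρ r := by
    intro r
    have := (cont_primitive_hasDerivAt hψsmooth.continuous 0 r).deriv
    rw [hφ]
    rw [this]
  have hψodd : ∀ r, ψ (-r) = -ψ r := by
    intro r
    show -r * ρ (-r) = -(r * ρ r)
    rw [hρeven]
    ring
  have hφeven : ∀ r, φ (-r) = φ r := by
    intro r
    have h1 : (∫ x in (0:ℝ)..r, ψ (-x)) = ∫ x in (-r:ℝ)..0, ψ x := by
      have := intervalIntegral.integral_comp_neg (a := (0:ℝ)) (b := r) (f := ψ)
      simpa using this
    have h2 : (∫ x in (0:ℝ)..r, ψ (-x)) = -φ r := by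
      rw [show -φ r = ∫ x in (0:ℝ)..r, -ψ x from (intervalIntegral.integral_neg).symm]
      apply intervalIntegral.integral_congr
      intro x _
      exact hψodd x
    have h3 : (∫ x in (-r:ℝ)..0, ψ x) = -φ (-r) := by
      rw [hφ]
      simp only
      rw [← intervalIntegral.integral_symm]
    rw [h2, h3] at h1
    linarith
  exact ⟨φ, ρ, ρ₁, hφsmooth, hφeven, hρsmooth, hρeven, hρpos,
    hφderiv, hρderiv, hψderivpos, hspace, hmain⟩


-- basic facts about dotp / eNorm
lemma dotp_nonneg {n : ℕ} (x : Fin n → ℝ) : 0 ≤ dotp x x :=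
  Finset.sum_nonneg fun i _ => mul_self_nonneg _

lemma eNorm_nonneg {n : ℕ} (x : Fin n → ℝ) : 0 ≤ eNorm x := Real.sqrt_nonneg _

lemma eNorm_zero {n : ℕ} : eNorm (0 : Fin n → ℝ) = 0 := by
  unfold eNorm dotp
  simp

lemma eNorm_sq {n : ℕ} (x : Fin n → ℝ) : eNorm x ^ 2 = dotp x x :=
  Real.sq_sqrt (dotp_nonneg x)

lemma dotp_pos {n : ℕ} {x : Fin n → ℝ} (hx : x ≠ 0) : 0 < dotp x x := by
  obtain ⟨i, hi⟩ : ∃ i, x i ≠ 0 := by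
    by_contra h
    push_neg at h
    exact hx (funext h)
  apply Finset.sum_pos' (fun j _ => mul_self_nonneg _)
  exact ⟨i, Finset.mem_univ i, mul_self_pos.mpr hi⟩

lemma eNorm_pos {n : ℕ} {x : Fin n → ℝ} (hx : x ≠ 0) : 0 < eNorm x :=
  Real.sqrt_pos.mpr (dotp_pos hx)

lemma continuous_dotp_self (n : ℕ) : Continuous (fun x : Fin n → ℝ => dotp x x) := by
  unfold dotp
  exact continuous_finset_sum _ fun i _ => (continuous_apply i).mul (continuous_apply i)

lemma continuous_eNorm (n : ℕ) : Continuous (fun x : Fin n → ℝ => eNorm x) :=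
  Real.continuous_sqrt.comp (continuous_dotp_self n)

lemma dotp_single {n : ℕ} (x : Fin n → ℝ) (i : Fin n) : dotp x (Pi.single i 1) = x i := by
  unfold dotp
  rw [Finset.sum_eq_single i]
  · simp
  · intro j _ hj
    simp [Pi.single_apply, hj]
  · simp

/-- the dot-product continuous linear functional -/
def Dclm (n : ℕ) (x : Fin n → ℝ) : (Fin n → ℝ) →L[ℝ] ℝ :=
  ∑ i, x i • ContinuousLinearMap.proj i

lemma Dclm_apply {n : ℕ} (x y : Fin n → ℝ) : Dclm n x y = dotp x y := by
  unfold Dclm dotp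
  rw [ContinuousLinearMap.sum_apply]
  apply Finset.sum_congr rfl
  intro i _
  simp

lemma Dclm_zero {n : ℕ} : Dclm n (0 : Fin n → ℝ) = 0 := by
  unfold Dclm
  simp

lemma hasFDerivAt_dotp_self {n : ℕ} (x : Fin n → ℝ) :
    HasFDerivAt (fun y : Fin n → ℝ => dotp y y) ((2 : ℝ) • Dclm n x) x := by
  have hproj : ∀ i : Fin n, HasFDerivAt (fun y : Fin n → ℝ => y i)
      (ContinuousLinearMap.proj i : (Fin n → ℝ) →L[ℝ] ℝ) x :=
    fun i => hasFDerivAt_apply i x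
  have h1 : HasFDerivAt (fun y : Fin n → ℝ => ∑ i, y i * y i)
      (∑ i : Fin n, (x i • (ContinuousLinearMap.proj i : (Fin n → ℝ) →L[ℝ] ℝ)
        + x i • (ContinuousLinearMap.proj i : (Fin n → ℝ) →L[ℝ] ℝ))) x := by
    apply HasFDerivAt.fun_sum
    intro i _
    exact (hproj i).mul (hproj i)
  refine h1.congr_fderiv ?_
  unfold Dclm
  rw [two_smul, Finset.sum_add_distrib]

lemma eNorm_tendsto_zero {n : ℕ} : Tendsto (fun x : Fin n → ℝ => eNorm x) (nhds 0) (nhds 0) := by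
  have := (continuous_eNorm n).tendsto 0
  rwa [eNorm_zero] at this

lemma eNorm_le_const_norm {n : ℕ} (x : Fin n → ℝ) : eNorm x ≤ Real.sqrt n * ‖x‖ := by
  have h1 : dotp x x ≤ (n : ℝ) * ‖x‖ ^ 2 := by
    unfold dotp
    calc ∑ i, x i * x i ≤ ∑ _i : Fin n, ‖x‖ ^ 2 := by
          apply Finset.sum_le_sum
          intro i _
          have : |x i| ≤ ‖x‖ := by
            rw [← Real.norm_eq_abs]
            exact norm_le_pi_norm x i
          nlinarith [abs_nonneg (x i), le_abs_self (x i), neg_abs_le (x i)]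
      _ = (n : ℝ) * ‖x‖ ^ 2 := by simp [Finset.sum_const, mul_comm]
  calc eNorm x = Real.sqrt (dotp x x) := rfl
    _ ≤ Real.sqrt ((n : ℝ) * ‖x‖ ^ 2) := Real.sqrt_le_sqrt h1
    _ = Real.sqrt n * ‖x‖ := by
        rw [Real.sqrt_mul (by positivity), Real.sqrt_sq (norm_nonneg _)]

/-- key differentiation lemma for radial functions -/
lemma radial_hasFDerivAt {n : ℕ} (θ σ : ℝ → ℝ) (hθ : ContDiff ℝ (⊤ : ℕ∞) θ)
    (hfac : ∀ r, deriv θ r = r * σ r) (x : Fin n → ℝ) :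
    HasFDerivAt (fun y : Fin n → ℝ => θ (eNorm y)) (σ (eNorm x) • Dclm n x) x := by
  have hθdiff : Differentiable ℝ θ := hθ.differentiable (by simp)
  by_cases hx : x = 0
  · subst hx
    rw [hasFDerivAt_iff_isLittleO_nhds_zero]
    have hd0 : HasDerivAt θ 0 0 := by
      have := (hθdiff 0).hasDerivAt
      rwa [hfac 0, zero_mul] at this
    have h1 : (fun r : ℝ => θ r - θ 0) =o[nhds 0] (fun r : ℝ => r) := by
      have h1' := hasDerivAt_iff_isLittleO.mp hd0
      simpa using h1'
    have h2 : (fun y : Fin n → ℝ => θ (eNorm y) - θ 0) =o[nhds 0] (fun y => eNorm y) :=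
      h1.comp_tendsto eNorm_tendsto_zero
    have h3 : (fun y : Fin n → ℝ => eNorm y) =O[nhds 0] (fun y => y) := by
      apply Asymptotics.IsBigO.of_bound (Real.sqrt n)
      apply Eventually.of_forall
      intro y
      rw [Real.norm_eq_abs, abs_of_nonneg (eNorm_nonneg y)]
      exact (eNorm_le_const_norm y).trans (le_of_eq rfl)
    have h4 := h2.trans_isBigO h3
    apply h4.congr'
    · apply Eventually.of_forall
      intro y
      simp [eNorm_zero, Dclm_zero]
    · exact Eventually.of_forall fun y => rfl
  · have hQ := hasFDerivAt_dotp_self x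
    have hQpos : 0 < dotp x x := dotp_pos hx
    have hr : 0 < eNorm x := eNorm_pos hx
    have hsqrt : HasDerivAt Real.sqrt (1 / (2 * Real.sqrt (dotp x x))) (dotp x x) :=
      Real.hasDerivAt_sqrt (ne_of_gt hQpos)
    have hN : HasFDerivAt (fun y : Fin n → ℝ => eNorm y)
        ((1 / (2 * Real.sqrt (dotp x x))) • ((2:ℝ) • Dclm n x)) x :=
      hsqrt.comp_hasFDerivAt_of_eq x hQ rfl
    have hθd : HasDerivAt θ (eNorm x * σ (eNorm x)) (eNorm x) := by
      have := (hθdiff (eNorm x)).hasDerivAt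
      rwa [hfac (eNorm x)] at this
    have := hθd.comp_hasFDerivAt x hN
    refine this.congr_fderiv ?_
    rw [smul_smul, smul_smul]
    congr 1
    rw [show Real.sqrt (dotp x x) = eNorm x from rfl]
    field_simp

lemma contDiff_Dclm {n : ℕ} (m : ℕ∞) : ContDiff ℝ m (fun x : Fin n → ℝ => Dclm n x) := by
  unfold Dclm
  apply ContDiff.sum
  intro i _
  exact (ContinuousLinearMap.proj i : (Fin n → ℝ) →L[ℝ] ℝ).contDiff.smul contDiff_const

lemma radial_contDiff_nat {n : ℕ} : ∀ (m : ℕ) (θ : ℝ → ℝ), ContDiff ℝ (⊤ : ℕ∞) θ →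
    (∀ r, θ (-r) = θ r) → ContDiff ℝ (m : ℕ∞) (fun x : Fin n → ℝ => θ (eNorm x)) := by
  intro m
  induction m with
  | zero =>
    intro θ hθ _
    have : Continuous (fun x : Fin n → ℝ => θ (eNorm x)) :=
      hθ.continuous.comp (continuous_eNorm n)
    simpa using (contDiff_zero (𝕜 := ℝ)).mpr this
  | succ m ih =>
    intro θ hθ he
    obtain ⟨σ, hσ, hσe, hfac⟩ := odd_factor hθ he
    have hdiff : Differentiable ℝ (fun x : Fin n → ℝ => θ (eNorm x)) := by
      intro x
      exact (radial_hasFDerivAt θ σ hθ hfac x).differentiableAt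
    have hfd : (fderiv ℝ (fun x : Fin n → ℝ => θ (eNorm x)))
        = fun x => σ (eNorm x) • Dclm n x := by
      funext x
      exact (radial_hasFDerivAt θ σ hθ hfac x).fderiv
    have hcd : ContDiff ℝ (m : ℕ∞) (fderiv ℝ (fun x : Fin n → ℝ => θ (eNorm x))) := by
      rw [hfd]
      exact (ih σ hσ hσe).smul (contDiff_Dclm (m : ℕ∞))
    have goal : ContDiff ℝ ((m : WithTop ℕ∞) + 1) (fun x : Fin n → ℝ => θ (eNorm x)) := by
      apply contDiff_succ_iff_fderiv.mpr
      refine ⟨hdiff, ?_, by exact_mod_cast hcd⟩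
      intro h
      exact absurd h (by simp)
    exact_mod_cast goal

lemma radial_contDiff_top {n : ℕ} (θ : ℝ → ℝ) (hθ : ContDiff ℝ (⊤ : ℕ∞) θ)
    (he : ∀ r, θ (-r) = θ r) : ContDiff ℝ (⊤ : ℕ∞) (fun x : Fin n → ℝ => θ (eNorm x)) := by
  have : ContDiff ℝ ((⊤ : ℕ∞) : WithTop ℕ∞) (fun x : Fin n → ℝ => θ (eNorm x)) := by
    rw [contDiff_infty]
    intro m
    exact_mod_cast radial_contDiff_nat m θ hθ he
  exact_mod_cast this

lemma dotp_comm {n : ℕ} (x y : Fin n → ℝ) : dotp x y = dotp y x := by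
  unfold dotp
  apply Finset.sum_congr rfl
  intro i _
  ring

lemma gradv_radial {n : ℕ} (φ ρ : ℝ → ℝ) (hφ : ContDiff ℝ (⊤ : ℕ∞) φ)
    (hφfac : ∀ r, deriv φ r = r * ρ r) (x : Fin n → ℝ) :
    gradv (fun y => φ (eNorm y)) x = fun i => ρ (eNorm x) * x i := by
  funext i
  unfold gradv
  rw [(radial_hasFDerivAt φ ρ hφ hφfac x).fderiv]
  rw [ContinuousLinearMap.smul_apply, Dclm_apply, dotp_single]
  rfl

lemma hessM_radial {n : ℕ} (φ ρ ρ₁ : ℝ → ℝ) (hφ : ContDiff ℝ (⊤ : ℕ∞) φ)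
    (hρsm : ContDiff ℝ (⊤ : ℕ∞) ρ)
    (hφfac : ∀ r, deriv φ r = r * ρ r) (hρfac : ∀ r, deriv ρ r = r * ρ₁ r)
    (x : Fin n → ℝ) :
    hessM (fun y => φ (eNorm y)) x =
      ρ (eNorm x) • (1 : Matrix (Fin n) (Fin n) ℝ)
        + ρ₁ (eNorm x) • Matrix.vecMulVec x x := by
  have hv : ∀ j, (fun y : Fin n → ℝ => fderiv ℝ (fun z => φ (eNorm z)) y (Pi.single j 1))
      = fun y => ρ (eNorm y) * y j := by
    intro j
    funext y
    rw [(radial_hasFDerivAt φ ρ hφ hφfac y).fderiv]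
    rw [ContinuousLinearMap.smul_apply, Dclm_apply, dotp_single]
    rfl
  ext i j
  show fderiv ℝ (fun y => fderiv ℝ (fun z => φ (eNorm z)) y (Pi.single j 1)) x (Pi.single i 1)
      = _
  rw [hv j]
  have hd : HasFDerivAt (fun y : Fin n → ℝ => ρ (eNorm y) * y j)
      (ρ (eNorm x) • (ContinuousLinearMap.proj j : (Fin n → ℝ) →L[ℝ] ℝ)
        + x j • (ρ₁ (eNorm x) • Dclm n x)) x :=
    (radial_hasFDerivAt ρ ρ₁ hρsm hρfac x).mul (hasFDerivAt_apply j x)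
  rw [hd.fderiv]
  rw [ContinuousLinearMap.add_apply, ContinuousLinearMap.smul_apply,
    ContinuousLinearMap.smul_apply, ContinuousLinearMap.smul_apply, Dclm_apply, dotp_single]
  simp only [ContinuousLinearMap.proj_apply]
  rw [Matrix.add_apply, Matrix.smul_apply, Matrix.smul_apply, Matrix.one_apply,
    Matrix.vecMulVec_apply]
  rw [Pi.single_apply]
  simp only [smul_eq_mul]
  by_cases hij : i = j
  · subst hij
    simp
    ring
  · rw [if_neg (fun h => hij h.symm), if_neg hij]
    ring

lemma det_aux {n : ℕ} (a c : ℝ) (ha : a ≠ 0) (hn : 1 ≤ n) (x : Fin n → ℝ) :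
    (a • (1 : Matrix (Fin n) (Fin n) ℝ) + c • Matrix.vecMulVec x x).det
      = a ^ (n-1) * (a + c * dotp x x) := by
  have h1 : a • (1 : Matrix (Fin n) (Fin n) ℝ) + c • Matrix.vecMulVec x x
      = a • ((1 : Matrix (Fin n) (Fin n) ℝ) + Matrix.vecMulVec ((c/a) • x) x) := by
    ext i j
    simp only [Matrix.add_apply, Matrix.smul_apply, Matrix.vecMulVec_apply, Pi.smul_apply,
      smul_eq_mul, Matrix.one_apply]
    field_simp
  rw [h1, Matrix.det_smul, Matrix.vecMulVec_eq (ι := Fin 1), Matrix.det_one_add_replicateCol_mul_replicateRow]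
  have h2 : x ⬝ᵥ ((c/a) • x) = (c/a) * dotp x x := by
    unfold dotProduct dotp
    rw [Finset.mul_sum]
    apply Finset.sum_congr rfl
    intro i _
    simp
    ring
  rw [h2]
  have h3 : a ^ n = a ^ (n-1) * a := by
    rw [← pow_succ]
    congr 1
    omega
  rw [Fintype.card_fin, h3]
  field_simp

lemma posdef_aux {n : ℕ} (a c : ℝ) (ha : 0 < a) (x : Fin n → ℝ)
    (h2 : 0 < a + c * dotp x x) :
    (a • (1 : Matrix (Fin n) (Fin n) ℝ) + c • Matrix.vecMulVec x x).PosDef := by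
  set M := a • (1 : Matrix (Fin n) (Fin n) ℝ) + c • Matrix.vecMulVec x x with hM
  rw [Matrix.posDef_iff_dotProduct_mulVec]
  constructor
  · show Mᴴ = M
    ext i j
    simp only [Matrix.conjTranspose_apply, hM, Matrix.add_apply, Matrix.smul_apply,
      Matrix.one_apply, Matrix.vecMulVec_apply, smul_eq_mul, star_trivial]
    by_cases hij : i = j
    · subst hij; ring
    · rw [if_neg hij, if_neg (fun h => hij h.symm)]
      ring
  · intro y hy
    have hrow : ∀ i, (M *ᵥ y) i = a * y i + c * x i * dotp x y := by
      intro i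
      show (∑ j, M i j * y j) = _
      have hterm : ∀ j, M i j * y j
          = a * ((if i = j then (1:ℝ) else 0) * y j) + c * x i * (x j * y j) := by
        intro j
        simp only [hM, Matrix.add_apply, Matrix.smul_apply, Matrix.one_apply,
          Matrix.vecMulVec_apply, smul_eq_mul]
        ring
      rw [Finset.sum_congr rfl (fun j _ => hterm j), Finset.sum_add_distrib,
        ← Finset.mul_sum, ← Finset.mul_sum]
      have hsum1 : (∑ j, (if i = j then (1:ℝ) else 0) * y j) = y i := by
        simp [ite_mul]
      rw [hsum1]
      rfl
    have hquad : star y ⬝ᵥ (M *ᵥ y) = a * dotp y y + c * (dotp x y)^2 := by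
      show (∑ i, star (y i) * (M *ᵥ y) i) = _
      rw [Finset.sum_congr rfl (fun i _ => by rw [hrow i, star_trivial])]
      have : ∀ i, y i * (a * y i + c * x i * dotp x y)
          = a * (y i * y i) + (c * dotp x y) * (x i * y i) := by intro i; ring
      rw [Finset.sum_congr rfl (fun i _ => this i), Finset.sum_add_distrib,
        ← Finset.mul_sum, ← Finset.mul_sum]
      have hxy : (∑ i, x i * y i) = dotp x y := rfl
      have hyy : (∑ i, y i * y i) = dotp y y := rfl
      rw [hxy, hyy]
      ring
    rw [hquad]
    have hyy : 0 < dotp y y := dotp_pos hy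
    rcases le_or_gt 0 c with hc | hc
    · have : 0 ≤ c * (dotp x y)^2 := by positivity
      nlinarith
    · have hCS : (dotp x y)^2 ≤ dotp x x * dotp y y := by
        have := Finset.sum_mul_sq_le_sq_mul_sq Finset.univ x y
        unfold dotp
        calc (∑ i, x i * y i)^2 ≤ (∑ i, x i ^2) * (∑ i, y i ^2) := this
          _ = (∑ i, x i * x i) * (∑ i, y i * y i) := by
              congr 1 <;> apply Finset.sum_congr rfl <;> intro i _ <;> ring
      nlinarith

lemma dotp_smul_self {n : ℕ} (t : ℝ) (x : Fin n → ℝ) :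
    dotp (fun i => t * x i) (fun i => t * x i) = t ^ 2 * dotp x x := by
  unfold dotp
  rw [Finset.mul_sum]
  apply Finset.sum_congr rfl
  intro i _
  ring


end AuxMinkowski

/-- Theorem A.2 (first part): for every positive smooth rotationally symmetric `g`
there is an entire strictly convex spacelike solution of the prescribed Gauß
curvature equation in Minkowski space. -/
theorem entire_minkowski_prescribed_gauss_curvature
    (n : ℕ) (hn : 2 ≤ n)
    (g : (Fin n → ℝ) → ℝ) (hg : ContDiff ℝ (⊤ : ℕ∞) g) (hgpos : ∀ x, 0 < g x)
    (hgsym : ∀ x y : Fin n → ℝ, eNorm x = eNorm y → g x = g y)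
 :
    ∃ u : (Fin n → ℝ) → ℝ,
      ContDiff ℝ (⊤ : ℕ∞) u ∧
      (∀ x, (hessM u x).PosDef) ∧
      (∀ x, eNorm (gradv u x) < 1) ∧
      (∀ x, (hessM u x).det =
        g x * (1 - dotp (gradv u x) (gradv u x)) ^ (((n : ℝ) + 2) / 2)) := by

  have hnpos : 0 < n := by omega
  set e₁ : Fin n → ℝ := Pi.single (⟨0, hnpos⟩ : Fin n) 1 with he₁
  have he₁norm : ∀ r : ℝ, eNorm (r • e₁) = |r| := by
    intro r
    unfold eNorm dotp
    have hterm : ∀ i : Fin n, (r • e₁) i * (r • e₁) i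
        = if i = (⟨0, hnpos⟩ : Fin n) then r ^ 2 else 0 := by
      intro i
      rw [he₁]
      simp only [Pi.smul_apply, smul_eq_mul, Pi.single_apply]
      by_cases hi : i = ⟨0, hnpos⟩ <;> simp [hi] <;> ring
    rw [Finset.sum_congr rfl (fun i _ => hterm i), Finset.sum_ite_eq' Finset.univ]
    simp [Real.sqrt_sq_eq_abs]
  set G : ℝ → ℝ := fun r => g (r • e₁) with hGdef
  have hGsmooth : ContDiff ℝ (⊤ : ℕ∞) G := hg.comp (contDiff_id.smul contDiff_const)
  have hGpos : ∀ r, 0 < G r := fun r => hgpos _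
  have hGeven : ∀ r, G (-r) = G r := fun r => hgsym _ _ (by rw [he₁norm, he₁norm, abs_neg])
  have hgx : ∀ x, g x = G (eNorm x) := by
    intro x
    apply hgsym
    rw [he₁norm, abs_of_nonneg (eNorm_nonneg x)]
  obtain ⟨φ, ρ, ρ₁, hφsm, hφe, hρsm, hρe, hρpos, hφfac, hρfac, hψpos, hspace, hmain⟩ :=
    oneDim n hn G hGsmooth hGpos hGeven
  refine ⟨fun x => φ (eNorm x), radial_contDiff_top φ hφsm hφe, ?_, ?_, ?_⟩
  · intro x
    rw [hessM_radial φ ρ ρ₁ hφsm hρsm hφfac hρfac x]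
    apply posdef_aux _ _ (hρpos _) x
    have h := hψpos (eNorm x)
    rw [eNorm_sq] at h
    calc (0:ℝ) < ρ (eNorm x) + dotp x x * ρ₁ (eNorm x) := h
      _ = ρ (eNorm x) + ρ₁ (eNorm x) * dotp x x := by ring
  · intro x
    rw [gradv_radial φ ρ hφsm hφfac x]
    have h1 : eNorm (fun i => ρ (eNorm x) * x i) = ρ (eNorm x) * eNorm x := by
      unfold eNorm
      rw [dotp_smul_self]
      rw [Real.sqrt_mul (sq_nonneg _)]
      rw [Real.sqrt_sq (le_of_lt (hρpos _))]
    rw [h1]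
    have h2 := hspace (eNorm x)
    have h3 : 0 ≤ eNorm x * ρ (eNorm x) :=
      mul_nonneg (eNorm_nonneg x) (le_of_lt (hρpos _))
    nlinarith
  · intro x
    rw [hessM_radial φ ρ ρ₁ hφsm hρsm hφfac hρfac x,
      gradv_radial φ ρ hφsm hφfac x,
      det_aux _ _ (ne_of_gt (hρpos _)) (by omega) x]
    rw [dotp_smul_self]
    rw [hgx x]
    have hQ : dotp x x = eNorm x ^ 2 := (eNorm_sq x).symm
    rw [hQ]
    have := hmain (eNorm x)
    calc ρ (eNorm x) ^ (n-1) * (ρ (eNorm x) + ρ₁ (eNorm x) * eNorm x ^ 2)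
        = ρ (eNorm x) ^ (n-1) * (ρ (eNorm x) + eNorm x ^ 2 * ρ₁ (eNorm x)) := by ring
      _ = G (eNorm x) * (1 - (eNorm x * ρ (eNorm x)) ^ 2) ^ (((n : ℝ) + 2) / 2) := this
      _ = G (eNorm x) * (1 - ρ (eNorm x) ^ 2 * eNorm x ^ 2) ^ (((n : ℝ) + 2) / 2) := by
          congr 2
          ring
end
end
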